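/- arXiv:1904.08902 — 12 statements merged into one kernel-verified Lean document; each statement's English description precedes it below -/
import Mathlib

section
/- A T0 topological space is completely regular if and only if it has a base that is a weakly completely regular family. -/
/-- A base of a topological space: a family of open sets such that every open
set is a union of members of the family. -/
def IsTopBase {X : Type*} [TopologicalSpace X] (B : Set (Set X)) : Prop :=
  (∀ U ∈ B, IsOpen U) ∧ ∀ U : Set X, IsOpen U → ∃ S ⊆ B, U = ⋃₀ S

/-- A π-base: a family of nonempty open sets such that every nonempty open set
contains a member of the family. -/
def IsPiBase {X : Type*} [TopologicalSpace X] (B : Set (Set X)) : Prop :=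
  (∀ U ∈ B, IsOpen U ∧ U.Nonempty) ∧
  ∀ U : Set X, IsOpen U → U.Nonempty → ∃ V ∈ B, V ⊆ U

/-- A cozero set: a set of the form `f ⁻¹' (0,1]` for a continuous `f : X → [0,1]`. -/
def IsCozeroSet {X : Type*} [TopologicalSpace X] (U : Set X) : Prop :=
  ∃ f : X → ℝ, Continuous f ∧ (∀ x, f x ∈ Set.Icc (0 : ℝ) 1) ∧
    U = f ⁻¹' Set.Ioc (0 : ℝ) 1

/-- `s` witnesses the FNS property for the family `B`: it assigns to each
`U ∈ B` a finite subfamily `s U ⊆ B` such that whenever `U, V ∈ B` are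
disjoint there are disjoint `W_U, W_V ∈ s U ∩ s V` with `U ⊆ W_U`, `V ⊆ W_V`. -/
def FNSWitness {X : Type*} (B : Set (Set X)) (s : Set X → Set (Set X)) : Prop :=
  (∀ U ∈ B, s U ⊆ B ∧ (s U).Finite) ∧
  ∀ U ∈ B, ∀ V ∈ B, Disjoint U V →
    ∃ WU ∈ s U ∩ s V, ∃ WV ∈ s U ∩ s V, Disjoint WU WV ∧ U ⊆ WU ∧ V ⊆ WV

/-- A family `B` has the FNS property if some `s` witnesses it. -/
def HasFNS {X : Type*} (B : Set (Set X)) : Prop :=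
  ∃ s : Set X → Set (Set X), FNSWitness B s

/-- A space has the π-FNS property if some π-base of it has the FNS property. -/
def HasPiFNS (X : Type*) [TopologicalSpace X] : Prop :=
  ∃ B : Set (Set X), IsPiBase B ∧ HasFNS B

/-- `u, l` witness the FN property for the family `F`. -/
def FNWitness {X : Type*} (F : Set (Set X)) (u l : Set X → Set (Set X)) : Prop :=
  (∀ V ∈ F, (u V).Finite ∧ ∀ U ∈ u V, U ∈ F ∧ V ⊆ U) ∧
  (∀ V ∈ F, (l V).Finite ∧ ∀ U ∈ l V, U ∈ F ∧ U ⊆ V) ∧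
  ∀ V ∈ F, ∀ W ∈ F, V ⊆ W → (u V ∩ l W).Nonempty

/-- A family `F` has the FN property if some pair `u, l` witnesses it. -/
def HasFN {X : Type*} (F : Set (Set X)) : Prop :=
  ∃ u l : Set X → Set (Set X), FNWitness F u l

/-- A family `P` of subsets of `X` is weakly completely regular: for any
finitely many `U₁, …, U_k ∈ P` (`k ≥ 1`) there are sequences `(A n)`, `(B n)`
of finite subfamilies of `P` with
`U₁ ∩ … ∩ U_k = ⋃ n, ⋃₀ A n = ⋃ n, (X \ ⋃₀ B n)` and
`⋃₀ A n ⊆ X \ ⋃₀ B n` for each `n`. -/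
def WeaklyCompletelyRegularFamily {X : Type*} (P : Set (Set X)) : Prop :=
  ∀ S : Set (Set X), S.Finite → S.Nonempty → S ⊆ P →
    ∃ A B : ℕ → Set (Set X),
      (∀ n, A n ⊆ P ∧ (A n).Finite) ∧ (∀ n, B n ⊆ P ∧ (B n).Finite) ∧
      ⋂₀ S = ⋃ n, ⋃₀ A n ∧ ⋂₀ S = ⋃ n, (⋃₀ B n)ᶜ ∧
      ∀ n, ⋃₀ A n ⊆ (⋃₀ B n)ᶜ

/-- The equivalence relation `x ~_P y` iff `x, y` belong to exactly the same
members of `P`. -/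
def famSetoid {X : Type*} (P : Set (Set X)) : Setoid X where
  r x y := ∀ V ∈ P, (x ∈ V ↔ y ∈ V)
  iseqv := ⟨fun _ _ _ => Iff.rfl, fun h V hV => (h V hV).symm,
    fun h1 h2 V hV => (h1 V hV).trans (h2 V hV)⟩

theorem isCozeroSet_isOpen {X : Type*} [TopologicalSpace X] {U : Set X}
    (h : IsCozeroSet U) : IsOpen U := by
  obtain ⟨f, hf, hb, rfl⟩ := h
  have : f ⁻¹' Set.Ioc (0:ℝ) 1 = f ⁻¹' Set.Ioi 0 := by
    ext y
    simp only [Set.mem_preimage, Set.mem_Ioc, Set.mem_Ioi]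
    exact ⟨fun h => h.1, fun h => ⟨h, (hb y).2⟩⟩
  rw [this]
  exact isOpen_Ioi.preimage hf

theorem IsCozeroSet.inter {X : Type*} [TopologicalSpace X] {U V : Set X}
    (hU : IsCozeroSet U) (hV : IsCozeroSet V) : IsCozeroSet (U ∩ V) := by
  obtain ⟨f, hf, hfb, rfl⟩ := hU
  obtain ⟨g, hg, hgb, rfl⟩ := hV
  refine ⟨fun x => min (f x) (g x), hf.min hg,
    fun x => ⟨le_min (hfb x).1 (hgb x).1, min_le_of_left_le (hfb x).2⟩, ?_⟩
  ext y
  simp only [Set.mem_inter_iff, Set.mem_preimage, Set.mem_Ioc, lt_min_iff, min_le_iff]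
  constructor
  · rintro ⟨⟨h1, h2⟩, ⟨h3, h4⟩⟩
    exact ⟨⟨h1, h3⟩, Or.inl h2⟩
  · rintro ⟨⟨h1, h3⟩, _⟩
    exact ⟨⟨h1, (hfb y).2⟩, ⟨h3, (hgb y).2⟩⟩

theorem IsCozeroSet.sInter {X : Type*} [TopologicalSpace X] {S : Set (Set X)}
    (hfin : S.Finite) :
    S.Nonempty → (∀ U ∈ S, IsCozeroSet U) → IsCozeroSet (⋂₀ S) := by
  refine Set.Finite.induction_on (motive := fun S _ => S.Nonempty → (∀ U ∈ S, IsCozeroSet U) → IsCozeroSet (⋂₀ S)) S hfin (fun h _ => absurd h (by simp)) ?_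
  intro a s ha hsfin ih _ hmem
  · 
    rcases s.eq_empty_or_nonempty with rfl | hsne
    · simpa using hmem a (Set.mem_insert a ∅)
    · rw [Set.sInter_insert]
      exact (hmem a (Set.mem_insert a s)).inter
        (ih hsne fun U hU => hmem U (Set.mem_insert_of_mem a hU))

theorem cozero_wcr {X : Type*} [TopologicalSpace X] :
    WeaklyCompletelyRegularFamily {U : Set X | IsCozeroSet U} := by
  intro S hfin hne hsub
  obtain ⟨g, hg, hgb, hEq⟩ := IsCozeroSet.sInter hfin hne hsub
  set c : ℕ → ℝ := fun n => (n : ℝ) + 2 with hc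
  have hcpos : ∀ n, 0 < c n := fun n => by positivity
  have hgnn : ∀ x, 0 ≤ g x := fun x => (hgb x).1
  -- membership characterizations
  have hmemA : ∀ n x, (min 1 (max 0 (c n * g x - 1)) ∈ Set.Ioc (0:ℝ) 1) ↔ 1 < c n * g x := by
    intro n x
    simp only [Set.mem_Ioc, lt_min_iff, lt_max_iff, sub_pos]
    constructor
    · rintro ⟨⟨_, h⟩, _⟩
      rcases h with h | h
      · linarith
      · exact h
    · intro h
      exact ⟨⟨one_pos, Or.inr h⟩, min_le_left _ _⟩
  have hmemB : ∀ n x, (max 0 (1 - c n * g x) ∈ Set.Ioc (0:ℝ) 1) ↔ c n * g x < 1 := by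
    intro n x
    have h0 : 0 ≤ c n * g x := mul_nonneg (hcpos n).le (hgnn x)
    simp only [Set.mem_Ioc, lt_max_iff, sub_pos]
    constructor
    · rintro ⟨h, _⟩
      rcases h with h | h
      · linarith
      · exact h
    · intro h
      exact ⟨Or.inr h, max_le (by norm_num) (by linarith)⟩
  have hmemS : ∀ x, x ∈ ⋂₀ S ↔ 0 < g x := by
    intro x
    rw [hEq]
    simp only [Set.mem_preimage, Set.mem_Ioc]
    exact ⟨fun h => h.1, fun h => ⟨h, (hgb x).2⟩⟩
  have harch : ∀ x, 0 < g x → ∃ n : ℕ, 1 < c n * g x := by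
    intro x hx
    obtain ⟨n, hn⟩ := exists_nat_gt (1 / g x)
    refine ⟨n, ?_⟩
    have h2 : 1 / g x < c n := by
      simp only [hc]; linarith
    calc (1:ℝ) = (1 / g x) * g x := by field_simp
    _ < c n * g x := by exact mul_lt_mul_of_pos_right h2 hx
  have hpos : ∀ n x, 1 ≤ c n * g x → 0 < g x := by
    intro n x h
    by_contra hle
    push_neg at hle
    nlinarith [hcpos n]
  refine ⟨fun n => {(fun x => min 1 (max 0 (c n * g x - 1))) ⁻¹' Set.Ioc 0 1},
          fun n => {(fun x => max 0 (1 - c n * g x)) ⁻¹' Set.Ioc 0 1},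
          ?_, ?_, ?_, ?_, ?_⟩
  · intro n
    refine ⟨Set.singleton_subset_iff.mpr ?_, Set.finite_singleton _⟩
    exact ⟨fun x => min 1 (max 0 (c n * g x - 1)),
      (continuous_const.min ((continuous_const.max (((continuous_const.mul hg)).sub continuous_const)))),
      fun x => ⟨le_min zero_le_one (le_max_left _ _), min_le_left _ _⟩, rfl⟩
  · intro n
    refine ⟨Set.singleton_subset_iff.mpr ?_, Set.finite_singleton _⟩
    refine ⟨fun x => max 0 (1 - c n * g x),
      (continuous_const.max (continuous_const.sub (continuous_const.mul hg))),
      fun x => ⟨le_max_left _ _, max_le zero_le_one ?_⟩, rfl⟩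
    have := mul_nonneg (hcpos n).le (hgnn x)
    linarith
  · ext x
    simp only [Set.mem_iUnion, Set.sUnion_singleton, Set.mem_preimage, hmemA, hmemS]
    exact ⟨harch x, fun ⟨n, hn⟩ => hpos n x hn.le⟩
  · ext x
    simp only [Set.mem_iUnion, Set.sUnion_singleton, Set.mem_compl_iff, Set.mem_preimage,
      hmemB, hmemS, not_lt]
    exact ⟨fun h => (harch x h).imp (fun n hn => hn.le), fun ⟨n, hn⟩ => hpos n x hn⟩
  · intro n x hx
    rw [Set.sUnion_singleton, Set.mem_preimage, hmemA] at hx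
    rw [Set.sUnion_singleton]
    simp only [Set.mem_compl_iff, Set.mem_preimage, hmemB, not_lt]
    exact hx.le

theorem wcr_aux {Z : Type*} [tZ : TopologicalSpace Z] (F : Set (Set Z))
    (hcount : F.Countable) (hgen : tZ = TopologicalSpace.generateFrom F)
    (hWF : ∀ S : Set (Set Z), S.Finite → S.Nonempty → S ⊆ F →
      ∃ A B : ℕ → Set (Set Z), (∀ n, A n ⊆ F) ∧ (∀ n, B n ⊆ F) ∧
        ⋂₀ S = ⋃ n, ⋃₀ A n ∧ ⋂₀ S = ⋃ n, (⋃₀ B n)ᶜ ∧ ∀ n, ⋃₀ A n ⊆ (⋃₀ B n)ᶜ)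
    {V₀ : Set Z} (hV₀ : V₀ ∈ F) {x : Z} (hx : x ∈ V₀) :
    ∃ f : Z → ℝ, Continuous f ∧ f x = 1 ∧ (∀ y, y ∉ V₀ → f y = 0) ∧
      ∀ y, f y ∈ Set.Icc (0 : ℝ) 1 := by
  subst hgen
  letI tZ' : TopologicalSpace Z := TopologicalSpace.generateFrom F
  have hopenF : ∀ U ∈ F, IsOpen U := fun U hU =>
    TopologicalSpace.isOpen_generateFrom_of_mem hU
  have hbasis := TopologicalSpace.isTopologicalBasis_of_subbasis (s := F) rfl
  haveI : SecondCountableTopology Z :=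
    hbasis.secondCountableTopology
      ((Set.countable_setOf_finite_subset hcount).image _)
  haveI : RegularSpace Z := by
    refine RegularSpace.of_exists_mem_nhds_isClosed_subset fun z s hs => ?_
    obtain ⟨W, ⟨S, ⟨hSfin, hSF⟩, rfl⟩, hzS, hSs⟩ := hbasis.mem_nhds_iff.mp hs
    rcases S.eq_empty_or_nonempty with rfl | hSne
    · exact ⟨Set.univ, Filter.univ_mem, isClosed_univ, by simpa using hSs⟩
    · obtain ⟨A, B, hAF, hBF, hA, hB, hsand⟩ := hWF S hSfin hSne hSF
      obtain ⟨n, hn⟩ : ∃ n, z ∈ ⋃₀ A n := by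
        have h' : z ∈ ⋂₀ S := hzS
        rw [hA] at h'
        simpa using h'
      refine ⟨(⋃₀ B n)ᶜ, ?_, ?_, ?_⟩
      · exact Filter.mem_of_superset
          ((isOpen_sUnion fun U hU => hopenF U (hAF n hU)).mem_nhds hn) (hsand n)
      · exact (isOpen_sUnion fun U hU => hopenF U (hBF n hU)).isClosed_compl
      · refine Set.Subset.trans ?_ hSs
        show (⋃₀ B n)ᶜ ⊆ ⋂₀ S
        rw [hB]
        exact Set.subset_iUnion (fun n => (⋃₀ B n)ᶜ) n
  obtain ⟨D, hD, hDclosed, hDV⟩ :=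
    exists_mem_nhds_isClosed_subset ((hopenF V₀ hV₀).mem_nhds hx)
  obtain ⟨f, hf0, hf1, hficc⟩ := exists_continuous_zero_one_of_isClosed
    (hopenF V₀ hV₀).isClosed_compl hDclosed
    (disjoint_compl_left.mono_right hDV)
  exact ⟨f, f.continuous, hf1 (mem_of_mem_nhds hD), fun y hy => hf0 hy, hficc⟩

/-- A `T₀` space is completely regular iff it has a weakly completely regular
base. -/
theorem completelyRegular_iff_wcr_base {X : Type*} [TopologicalSpace X]
    [T0Space X] :
    CompletelyRegularSpace X ↔
      ∃ B : Set (Set X), IsTopBase B ∧ WeaklyCompletelyRegularFamily B := by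
  constructor
  · intro hcr
    refine ⟨{U | IsCozeroSet U}, ⟨fun U hU => isCozeroSet_isOpen hU, fun U hU => ?_⟩, cozero_wcr⟩
    refine ⟨{V | IsCozeroSet V ∧ V ⊆ U}, fun V hV => hV.1, ?_⟩
    apply Set.Subset.antisymm
    · intro x hx
      obtain ⟨f, hf, hf0, hfK⟩ :=
        hcr.completely_regular x Uᶜ hU.isClosed_compl (fun h => h hx)
      refine ⟨(fun y => 1 - (f y : ℝ)) ⁻¹' Set.Ioc 0 1,
        ⟨⟨fun y => 1 - (f y : ℝ), continuous_const.sub (continuous_subtype_val.comp hf),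
          fun y => ⟨by show (0:ℝ) ≤ 1 - (f y : ℝ); linarith [(f y).2.2],
            by show (1:ℝ) - (f y : ℝ) ≤ 1; linarith [(f y).2.1]⟩, rfl⟩, ?_⟩, ?_⟩
      · intro y hy
        by_contra hyU
        have h1 : f y = 1 := hfK hyU
        rw [Set.mem_preimage, h1] at hy
        simp at hy
      · rw [Set.mem_preimage, hf0]
        norm_num
    · exact Set.sUnion_subset fun V hV => hV.2
  · rintro ⟨B, ⟨hBopen, hBcover⟩, hWCR⟩
    refine ⟨fun x K hK hxK => ?_⟩
    obtain ⟨S₀, hS₀B, hS₀⟩ := hBcover Kᶜ hK.isOpen_compl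
    have hxU : x ∈ ⋃₀ S₀ := by rw [← hS₀]; exact hxK
    obtain ⟨V₀, hV₀S₀, hxV₀⟩ := hxU
    have hV₀B : V₀ ∈ B := hS₀B hV₀S₀
    have hV₀K : V₀ ⊆ Kᶜ := by rw [hS₀]; exact Set.subset_sUnion_of_mem hV₀S₀
    have hch : ∀ S : Set (Set X), ∃ A Bf : ℕ → Set (Set X),
        S.Finite → S.Nonempty → S ⊆ B →
        ((∀ n, A n ⊆ B ∧ (A n).Finite) ∧ (∀ n, Bf n ⊆ B ∧ (Bf n).Finite) ∧
         ⋂₀ S = ⋃ n, ⋃₀ A n ∧ ⋂₀ S = ⋃ n, (⋃₀ Bf n)ᶜ ∧ ∀ n, ⋃₀ A n ⊆ (⋃₀ Bf n)ᶜ) := by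
      intro S
      by_cases h : S.Finite ∧ S.Nonempty ∧ S ⊆ B
      · obtain ⟨A, Bf, h1, h2, h3, h4, h5⟩ := hWCR S h.1 h.2.1 h.2.2
        exact ⟨A, Bf, fun _ _ _ => ⟨h1, h2, h3, h4, h5⟩⟩
      · exact ⟨fun _ => ∅, fun _ => ∅, fun h1 h2 h3 => absurd ⟨h1, h2, h3⟩ h⟩
    choose 𝒜 ℬ hprops using hch
    set step : Set (Set X) → Set (Set X) := fun C =>
      C ∪ ⋃ (S ∈ {T : Set (Set X) | T ⊆ C ∧ T.Finite ∧ T.Nonempty}) (n : ℕ),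
        (𝒜 S n ∪ ℬ S n) with hstep
    set Fam : ℕ → Set (Set X) := fun k => step^[k] {V₀} with hFam
    have hFam0 : Fam 0 = {V₀} := rfl
    have hFamsucc : ∀ k, Fam (k + 1) = step (Fam k) := fun k =>
      Function.iterate_succ_apply' step k {V₀}
    have hstepsub : ∀ C, C ⊆ step C := fun C => Set.subset_union_left
    have hmono : Monotone Fam :=
      monotone_nat_of_le_succ fun k => by rw [hFamsucc k]; exact hstepsub _
    have hinv : ∀ k, Fam k ⊆ B ∧ (Fam k).Countable := by
      intro k
      induction k with
      | zero => exact ⟨Set.singleton_subset_iff.mpr hV₀B, Set.countable_singleton _⟩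
      | succ k ih =>
        rw [hFamsucc k]
        obtain ⟨hCB, hCc⟩ := ih
        constructor
        · rintro W (hW | hW)
          · exact hCB hW
          · simp only [Set.mem_iUnion] at hW
            obtain ⟨S, ⟨hSC, hSfin, hSne⟩, n, hW⟩ := hW
            have hp := hprops S hSfin hSne (hSC.trans hCB)
            rcases hW with hW | hW
            · exact (hp.1 n).1 hW
            · exact (hp.2.1 n).1 hW
        · refine hCc.union ?_
          have hDc : {T : Set (Set X) | T ⊆ Fam k ∧ T.Finite ∧ T.Nonempty}.Countable := by
            apply Set.Countable.mono _ (Set.countable_setOf_finite_subset hCc)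
            rintro S ⟨h1, h2, h3⟩
            exact ⟨h2, h1⟩
          refine Set.Countable.biUnion hDc ?_
          · intro S hS
            refine Set.countable_iUnion fun n => ?_
            have hp := hprops S hS.2.1 hS.2.2 (hS.1.trans hCB)
            exact (((hp.1 n).2).union ((hp.2.1 n).2)).countable
    set F : Set (Set X) := ⋃ k, Fam k with hF
    have hFB : F ⊆ B := Set.iUnion_subset fun k => (hinv k).1
    have hFcnt : F.Countable := Set.countable_iUnion fun k => (hinv k).2
    have hV₀F : V₀ ∈ F := Set.mem_iUnion.mpr ⟨0, rfl⟩
    have hclose : ∀ S : Set (Set X), S.Finite → S.Nonempty → S ⊆ F →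
        ∀ n, 𝒜 S n ⊆ F ∧ ℬ S n ⊆ F := by
      intro S hSfin hSne hSF
      obtain ⟨I, hIfin, hImem⟩ := Set.finite_subset_iUnion hSfin hSF
      obtain ⟨N, hN⟩ := hIfin.bddAbove
      have hSFam : S ⊆ Fam N :=
        hImem.trans (Set.iUnion₂_subset fun i hi => hmono (hN hi))
      intro n
      have hmem : ∀ W, W ∈ 𝒜 S n ∪ ℬ S n → W ∈ F := by
        intro W hW
        refine Set.mem_iUnion.mpr ⟨N + 1, ?_⟩
        rw [hFamsucc N]
        refine Set.mem_union_right _ ?_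
        refine Set.mem_iUnion.mpr ⟨S, ?_⟩
        refine Set.mem_iUnion.mpr ⟨⟨hSFam, hSfin, hSne⟩, ?_⟩
        exact Set.mem_iUnion.mpr ⟨n, hW⟩
      exact ⟨fun W hW => hmem W (Or.inl hW), fun W hW => hmem W (Or.inr hW)⟩
    have hWF : ∀ S : Set (Set X), S.Finite → S.Nonempty → S ⊆ F →
        ∃ A Bf : ℕ → Set (Set X), (∀ n, A n ⊆ F) ∧ (∀ n, Bf n ⊆ F) ∧
          ⋂₀ S = ⋃ n, ⋃₀ A n ∧ ⋂₀ S = ⋃ n, (⋃₀ Bf n)ᶜ ∧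
          ∀ n, ⋃₀ A n ⊆ (⋃₀ Bf n)ᶜ := by
      intro S hSfin hSne hSF
      have hp := hprops S hSfin hSne (hSF.trans hFB)
      exact ⟨𝒜 S, ℬ S, fun n => (hclose S hSfin hSne hSF n).1,
        fun n => (hclose S hSfin hSne hSF n).2, hp.2.2.1, hp.2.2.2.1, hp.2.2.2.2⟩
    obtain ⟨f, hfc, hfx, hf0, hfb⟩ :=
      @wcr_aux X (TopologicalSpace.generateFrom F) F hFcnt rfl hWF V₀ hV₀F x hxV₀
    have hfc' : Continuous f :=
      continuous_le_dom (le_generateFrom fun U hU => hBopen U (hFB hU)) hfc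
    refine ⟨fun y => Set.projIcc 0 1 zero_le_one (1 - f y),
      continuous_projIcc.comp (continuous_const.sub hfc'), ?_, ?_⟩
    · apply Subtype.ext
      show (Set.projIcc 0 1 zero_le_one (1 - f x) : ℝ) = ((0 : unitInterval) : ℝ)
      rw [Set.coe_projIcc, hfx]
      norm_num
    · intro y hy
      have hy0 : f y = 0 := hf0 y (fun h => (hV₀K h) hy)
      apply Subtype.ext
      show (Set.projIcc 0 1 zero_le_one (1 - f y) : ℝ) = ((1 : X → unitInterval) y : ℝ)
      rw [Set.coe_projIcc, hy0]
      norm_num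
end

section
/- If P is a countable, weakly completely regular family of open subsets of a topological space X, then every member of P is a cozero set of X, i.e., for every U ∈ P there is a continuous function f : X → [0,1] with U = f⁻¹((0,1]). -/
private lemma isCozeroSet_of_isOpen_pm {X : Type*} [TopologicalSpace X]
    [TopologicalSpace.PseudoMetrizableSpace X] {U : Set X} (hU : IsOpen U) : IsCozeroSet U := by
  letI : PseudoMetricSpace X := TopologicalSpace.pseudoMetrizableSpacePseudoMetric X
  rcases eq_or_ne U Set.univ with rfl | hne
  · exact ⟨fun _ => 1, continuous_const, fun x => ⟨zero_le_one, le_refl 1⟩, by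
      ext x; simp⟩
  · have hcne : Uᶜ.Nonempty := Set.nonempty_compl.2 hne
    refine ⟨fun x => min 1 (Metric.infDist x Uᶜ),
      continuous_const.min (Metric.continuous_infDist_pt _),
      fun x => ⟨le_min zero_le_one Metric.infDist_nonneg, min_le_left _ _⟩, ?_⟩
    ext x
    simp only [Set.mem_preimage, Set.mem_Ioc, lt_min_iff, min_le_left, and_true]
    rw [← hU.isClosed_compl.notMem_iff_infDist_pos hcne]
    simp [zero_lt_one]

private lemma isCozeroSet_mono {X : Type*} {t t' : TopologicalSpace X} (h : t ≤ t') {U : Set X}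
    (hU : @IsCozeroSet X t' U) : @IsCozeroSet X t U := by
  obtain ⟨f, hf, hr, hp⟩ := hU
  exact ⟨f, continuous_le_dom h hf, hr, hp⟩

private lemma aux_gen_cozero {X : Type*} [t : TopologicalSpace X] (P : Set (Set X))
    (ht : t = TopologicalSpace.generateFrom P) (hPcount : P.Countable)
    (hPwcr : WeaklyCompletelyRegularFamily P) : ∀ U ∈ P, IsCozeroSet U := by
  have hPopen : ∀ U ∈ P, IsOpen U := fun U hU => ht ▸ TopologicalSpace.GenerateOpen.basic U hU
  have hbasis := TopologicalSpace.isTopologicalBasis_of_subbasis ht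
  haveI : SecondCountableTopology X :=
    hbasis.secondCountableTopology ((Set.countable_setOf_finite_subset hPcount).image _)
  haveI : RegularSpace X := by
    refine RegularSpace.of_exists_mem_nhds_isClosed_subset fun a s hs => ?_
    obtain ⟨t0, ⟨f, ⟨hffin, hfP⟩, rfl⟩, haf, hfs⟩ := hbasis.mem_nhds_iff.1 hs
    rcases f.eq_empty_or_nonempty with rfl | hfne
    · exact ⟨Set.univ, Filter.univ_mem, isClosed_univ, by simpa using hfs⟩
    · obtain ⟨A, B, hA, hB, hEqA, hEqB, hAB⟩ := hPwcr f hffin hfne hfP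
      have ha' : a ∈ ⋃ n, ⋃₀ A n := hEqA ▸ haf
      obtain ⟨n, hn⟩ := Set.mem_iUnion.1 ha'
      refine ⟨(⋃₀ B n)ᶜ, ?_, ?_, fun x hx => hfs (show x ∈ ⋂₀ f from ?_)⟩
      · exact Filter.mem_of_superset
          ((isOpen_sUnion fun V hV => hPopen V ((hA n).1 hV)).mem_nhds hn) (hAB n)
      · exact (isOpen_sUnion fun V hV => hPopen V ((hB n).1 hV)).isClosed_compl
      · exact hEqB ▸ Set.mem_iUnion.2 ⟨n, hx⟩
  exact fun U hU => isCozeroSet_of_isOpen_pm (hPopen U hU)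

/-- Every member of a countable weakly completely regular family of open sets
is a cozero set. -/
theorem isCozeroSet_of_mem_countable_wcr {X : Type*} [TopologicalSpace X]
    (P : Set (Set X)) (hPopen : ∀ U ∈ P, IsOpen U) (hPcount : P.Countable)
    (hPwcr : WeaklyCompletelyRegularFamily P) :
    ∀ U ∈ P, IsCozeroSet U := by
  intro U hU
  have hle : ‹TopologicalSpace X› ≤ TopologicalSpace.generateFrom P := le_generateFrom hPopen
  exact isCozeroSet_mono hle
    (@aux_gen_cozero X (TopologicalSpace.generateFrom P) P rfl hPcount hPwcr U hU)
end

section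
/- Let X be a compact Hausdorff space, let B be a base of X consisting of cozero sets with the FNS property witnessed by s, and let P ⊆ B be a countable, weakly completely regular family such that s(V) ⊆ P for all V ∈ P. Then the quotient map q_P : X → X/P is a continuous open surjection onto a compact metrizable space. -/
section AuxForQuotientTheorem

variable {X : Type*} [TopologicalSpace X]
set_option linter.unusedSectionVars false

/-- The definitions from the problem file, assumed available: we restate the needed
hypotheses structurally in the lemmas below (they are stated with raw data). -/

private lemma wcr_sep_pair {P : Set (Set X)}
    (hPwcr : ∀ S : Set (Set X), S.Finite → S.Nonempty → S ⊆ P →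
      ∃ A B : ℕ → Set (Set X),
        (∀ n, A n ⊆ P ∧ (A n).Finite) ∧ (∀ n, B n ⊆ P ∧ (B n).Finite) ∧
        ⋂₀ S = ⋃ n, ⋃₀ A n ∧ ⋂₀ S = ⋃ n, (⋃₀ B n)ᶜ ∧
        ∀ n, ⋃₀ A n ⊆ (⋃₀ B n)ᶜ)
    {V : Set X} (hV : V ∈ P) {a b : X} (ha : a ∈ V) (hb : b ∉ V) :
    ∃ S₁ S₂ : Set (Set X), S₁ ⊆ P ∧ S₂ ⊆ P ∧ S₁.Finite ∧ S₂.Finite ∧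
      a ∈ ⋃₀ S₁ ∧ b ∈ ⋃₀ S₂ ∧ Disjoint (⋃₀ S₁) (⋃₀ S₂) := by
  obtain ⟨A, Bs, hA, hBs, hEq1, hEq2, hSub⟩ :=
    hPwcr {V} (Set.finite_singleton V) (Set.singleton_nonempty V)
      (Set.singleton_subset_iff.2 hV)
  rw [Set.sInter_singleton] at hEq1 hEq2
  have ha' : a ∈ ⋃ n, ⋃₀ A n := hEq1 ▸ ha
  obtain ⟨m, hm⟩ := Set.mem_iUnion.1 ha'
  have hb' : b ∈ ⋃₀ Bs m := by
    by_contra h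
    exact hb (hEq2 ▸ Set.mem_iUnion.2 (⟨m, h⟩ : ∃ n, b ∈ (⋃₀ Bs n)ᶜ))
  exact ⟨A m, Bs m, (hA m).1, (hBs m).1, (hA m).2, (hBs m).2, hm, hb',
    Set.disjoint_left.2 fun x hx hx2 => (hSub m hx) hx2⟩

/-- Lemma A′: if `w` and `v` are not `P`-equivalent then there is `W ∈ P` with
`v ∈ W` and `w ∉ W`. -/
private lemma exists_sep {P : Set (Set X)}
    (hPwcr : ∀ S : Set (Set X), S.Finite → S.Nonempty → S ⊆ P →
      ∃ A B : ℕ → Set (Set X),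
        (∀ n, A n ⊆ P ∧ (A n).Finite) ∧ (∀ n, B n ⊆ P ∧ (B n).Finite) ∧
        ⋂₀ S = ⋃ n, ⋃₀ A n ∧ ⋂₀ S = ⋃ n, (⋃₀ B n)ᶜ ∧
        ∀ n, ⋃₀ A n ⊆ (⋃₀ B n)ᶜ)
    {v w : X} (h : ¬ ∀ V ∈ P, (w ∈ V ↔ v ∈ V)) :
    ∃ W ∈ P, v ∈ W ∧ w ∉ W := by
  push_neg at h
  obtain ⟨V, hV, hne⟩ := h
  rcases hne with ⟨hwV, hvV⟩ | ⟨hwV, hvV⟩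
  · obtain ⟨S₁, S₂, hS₁P, hS₂P, _, _, hw1, hv2, hd⟩ := wcr_sep_pair hPwcr hV hwV hvV
    obtain ⟨W, hWmem, hvW⟩ := hv2
    refine ⟨W, hS₂P hWmem, hvW, fun hwW => ?_⟩
    exact Set.disjoint_left.1 hd hw1 ⟨W, hWmem, hwW⟩
  · exact ⟨V, hV, hvV, hwV⟩

/-- The key lemma: if the class of `w` is disjoint from a nonempty compact set `C`,
then there is `A ∈ P` containing `w` and disjoint from `C`. -/
private lemma key_lemma {B P : Set (Set X)}
    (hBopen : ∀ U ∈ B, IsOpen U) (hPB : P ⊆ B)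
    (hPwcr : ∀ S : Set (Set X), S.Finite → S.Nonempty → S ⊆ P →
      ∃ A B : ℕ → Set (Set X),
        (∀ n, A n ⊆ P ∧ (A n).Finite) ∧ (∀ n, B n ⊆ P ∧ (B n).Finite) ∧
        ⋂₀ S = ⋃ n, ⋃₀ A n ∧ ⋂₀ S = ⋃ n, (⋃₀ B n)ᶜ ∧
        ∀ n, ⋃₀ A n ⊆ (⋃₀ B n)ᶜ)
    {C : Set X} (hCcomp : IsCompact C) (hCne : C.Nonempty) {w : X}
    (hsep : ∀ v ∈ C, ¬ ∀ V ∈ P, (w ∈ V ↔ v ∈ V)) :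
    ∃ A ∈ P, w ∈ A ∧ Disjoint A C := by
  classical
  -- Step 1: cover `C` by members of `P` not containing `w`.
  set ι := {W : Set X // W ∈ P ∧ w ∉ W} with hι
  have hcov1 : C ⊆ ⋃ i : ι, (i : Set X) := by
    intro v hv
    obtain ⟨W, hWP, hvW, hwW⟩ := exists_sep hPwcr (hsep v hv)
    exact Set.mem_iUnion.2 ⟨⟨W, hWP, hwW⟩, hvW⟩
  -- WCR data for each member.
  have hwcrι : ∀ i : ι, ∃ A Bs : ℕ → Set (Set X),
      (∀ n, A n ⊆ P ∧ (A n).Finite) ∧ (∀ n, Bs n ⊆ P ∧ (Bs n).Finite) ∧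
      (i : Set X) = ⋃ n, ⋃₀ A n ∧ (i : Set X) = ⋃ n, (⋃₀ Bs n)ᶜ ∧
      ∀ n, ⋃₀ A n ⊆ (⋃₀ Bs n)ᶜ := by
    intro i
    obtain ⟨A, Bs, h1, h2, h3, h4, h5⟩ :=
      hPwcr {(i : Set X)} (Set.finite_singleton _) (Set.singleton_nonempty _)
        (Set.singleton_subset_iff.2 i.2.1)
    rw [Set.sInter_singleton] at h3 h4
    exact ⟨A, Bs, h1, h2, h3, h4, h5⟩
  choose 𝒜 ℬ h𝒜 hℬ hEq1 hEq2 hSub using hwcrι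
  -- Step 2: refine to a finite subcover by the `A`-pieces.
  have hcov2 : C ⊆ ⋃ p : ι × ℕ, ⋃₀ 𝒜 p.1 p.2 := by
    intro v hv
    obtain ⟨i, hvi⟩ := Set.mem_iUnion.1 (hcov1 hv)
    have : v ∈ ⋃ n, ⋃₀ 𝒜 i n := (hEq1 i) ▸ hvi
    obtain ⟨n, hn⟩ := Set.mem_iUnion.1 this
    exact Set.mem_iUnion.2 ⟨(i, n), hn⟩
  obtain ⟨t₂, ht₂⟩ := hCcomp.elim_finite_subcover (fun p : ι × ℕ => ⋃₀ 𝒜 p.1 p.2)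
    (fun p => isOpen_sUnion fun A hA => hBopen A (hPB ((h𝒜 p.1 p.2).1 hA))) hcov2
  -- Step 3: choose `W p ∈ ℬ p` containing `w`, for each `p`.
  have hWex : ∀ p : ι × ℕ, ∃ W, W ∈ ℬ p.1 p.2 ∧ w ∈ W := by
    intro p
    have hw' : w ∉ (⋃₀ ℬ p.1 p.2)ᶜ := by
      intro hc
      exact p.1.2.2 ((hEq2 p.1) ▸ Set.mem_iUnion.2 (⟨p.2, hc⟩ : ∃ n, w ∈ (⋃₀ ℬ p.1 n)ᶜ))
    obtain ⟨W, hW, hwW⟩ := not_not.1 hw'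
    exact ⟨W, hW, hwW⟩
  choose Wf hWf1 hWf2 using hWex
  -- The finite family `𝒮`.
  set 𝒮 : Set (Set X) := Wf '' (t₂ : Set (ι × ℕ)) with h𝒮
  have h𝒮P : 𝒮 ⊆ P := by
    rintro _ ⟨p, hp, rfl⟩
    exact (hℬ p.1 p.2).1 (hWf1 p)
  have h𝒮fin : 𝒮.Finite := t₂.finite_toSet.image _
  have hw𝒮 : w ∈ ⋂₀ 𝒮 := by
    rintro _ ⟨p, hp, rfl⟩
    exact hWf2 p
  have h𝒮ne : 𝒮.Nonempty := by
    obtain ⟨v, hv⟩ := hCne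
    obtain ⟨p, hp⟩ := Set.mem_iUnion.1 (ht₂ hv)
    obtain ⟨hpt, _⟩ := Set.mem_iUnion.1 hp
    exact ⟨Wf p, ⟨p, hpt, rfl⟩⟩
  have hdisjC : Disjoint (⋂₀ 𝒮) C := by
    rw [Set.disjoint_right]
    intro v hv hv𝒮
    obtain ⟨p, hp⟩ := Set.mem_iUnion.1 (ht₂ hv)
    obtain ⟨hpt, hvA⟩ := Set.mem_iUnion.1 hp
    have hvB : v ∈ (⋃₀ ℬ p.1 p.2)ᶜ := hSub p.1 p.2 hvA
    have hvW : v ∈ Wf p := hv𝒮 (Wf p) ⟨p, hpt, rfl⟩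
    exact hvB ⟨Wf p, hWf1 p, hvW⟩
  -- Step 4: apply WCR to `𝒮` and take the `A`-piece containing `w`.
  obtain ⟨A', Bs', hA', hBs', hEq1', hEq2', hSub'⟩ := hPwcr 𝒮 h𝒮fin h𝒮ne h𝒮P
  have hw' : w ∈ ⋃ n, ⋃₀ A' n := hEq1' ▸ hw𝒮
  obtain ⟨n, hn⟩ := Set.mem_iUnion.1 hw'
  obtain ⟨Ad, hAdmem, hwAd⟩ := hn
  refine ⟨Ad, (hA' n).1 hAdmem, hwAd, ?_⟩
  have hsub : Ad ⊆ ⋂₀ 𝒮 := by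
    intro x hx
    have : x ∈ (⋃₀ Bs' n)ᶜ := hSub' n ⟨Ad, hAdmem, hx⟩
    exact hEq2' ▸ Set.mem_iUnion.2 (⟨n, this⟩ : ∃ m, x ∈ (⋃₀ Bs' m)ᶜ)
  exact hdisjC.mono_left hsub

end AuxForQuotientTheorem

private lemma exists_basic {X : Type*} [TopologicalSpace X] [CompactSpace X] [T2Space X]
    {B P : Set (Set X)} {s : Set X → Set (Set X)}
    (hB : IsTopBase B) (hs : FNSWitness B s) (hPB : P ⊆ B)
    (hPwcr : WeaklyCompletelyRegularFamily P) (hPs : ∀ V ∈ P, s V ⊆ P)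
    {G : Set X} (hG : IsOpen G) {x y : X} (hyG : y ∈ G)
    (hyx : ∀ V ∈ P, (y ∈ V ↔ x ∈ V)) :
    ∃ F : Set (Set X), F ⊆ P ∧ F.Finite ∧ x ∈ ⋂₀ F ∧
      ∀ w ∈ ⋂₀ F, ∃ v ∈ G, ∀ V ∈ P, (v ∈ V ↔ w ∈ V) := by
  obtain ⟨O, hOopen, hyO, hclO⟩ :=
    normal_exists_closure_subset isClosed_singleton hG (Set.singleton_subset_iff.2 hyG)
  obtain ⟨S', hS'B, hOeq⟩ := hB.2 O hOopen
  have hyO' : y ∈ ⋃₀ S' := hOeq ▸ (Set.singleton_subset_iff.1 hyO)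
  obtain ⟨U, hUS', hyU⟩ := hyO'
  have hUB : U ∈ B := hS'B hUS'
  have hUO : U ⊆ O := hOeq ▸ Set.subset_sUnion_of_mem hUS'
  have hclU : closure U ⊆ G := (closure_mono hUO).trans hclO
  refine ⟨{W | W ∈ s U ∧ W ∈ P ∧ U ⊆ W}, fun W hW => hW.2.1,
    ((hs.1 U hUB).2).subset (fun W hW => hW.1), ?_, ?_⟩
  · intro W hW
    exact (hyx W hW.2.1).1 (hW.2.2 hyU)
  · intro w hw
    by_contra hcon
    have hsep : ∀ v ∈ closure U, ¬ ∀ V ∈ P, (w ∈ V ↔ v ∈ V) := by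
      intro v hv hh
      exact hcon ⟨v, hclU hv, fun V hV => (hh V hV).symm⟩
    obtain ⟨Ad, hAdP, hwAd, hdisj⟩ := key_lemma hB.1 hPB hPwcr
      (isClosed_closure.isCompact) ⟨y, subset_closure hyU⟩ hsep
    have hdisjU : Disjoint U Ad := hdisj.symm.mono_left subset_closure
    obtain ⟨W₁, hW₁, W₂, hW₂, hd, hUW₁, hAW₂⟩ := hs.2 U hUB Ad (hPB hAdP) hdisjU
    have hW₁P : W₁ ∈ P := hPs Ad hAdP hW₁.2
    have hw1 : w ∈ W₁ := hw W₁ ⟨hW₁.1, hW₁P, hUW₁⟩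
    exact Set.disjoint_left.1 hd hw1 (hAW₂ hwAd)

/-- If `B` is a base of cozero sets of a compact Hausdorff space with FNS
witness `s`, and `P ⊆ B` is countable, weakly completely regular and closed
under `s`, then the quotient map `q_P : X → X/P` is a continuous open
surjection onto a compact metrizable space. -/
theorem quotient_map_open_onto_compact_metrizable {X : Type*}
    [TopologicalSpace X] [CompactSpace X] [T2Space X]
    (B : Set (Set X)) (hB : IsTopBase B) (hBcoz : ∀ U ∈ B, IsCozeroSet U)
    (s : Set X → Set (Set X)) (hs : FNSWitness B s)
    (P : Set (Set X)) (hPB : P ⊆ B) (hPcount : P.Countable)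
    (hPwcr : WeaklyCompletelyRegularFamily P) (hPs : ∀ V ∈ P, s V ⊆ P) :
    Continuous (Quotient.mk (famSetoid P)) ∧
    IsOpenMap (Quotient.mk (famSetoid P)) ∧
    Function.Surjective (Quotient.mk (famSetoid P)) ∧
    CompactSpace (Quotient (famSetoid P)) ∧
    TopologicalSpace.MetrizableSpace (Quotient (famSetoid P)) := by
  classical
  set q : X → Quotient (famSetoid P) := Quotient.mk (famSetoid P) with hqdef
  have hcont : Continuous q := continuous_quot_mk
  have hsurj : Function.Surjective q := fun ζ => ⟨ζ.out, Quotient.out_eq ζ⟩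
  -- preimages of images of "saturated" sets
  have hsatpre : ∀ T : Set X, (∀ a b : X, (∀ V ∈ P, (a ∈ V ↔ b ∈ V)) → a ∈ T → b ∈ T) →
      q ⁻¹' (q '' T) = T := by
    intro T hT
    apply Set.Subset.antisymm
    · rintro w ⟨v, hvT, hvw⟩
      exact hT v w (Quotient.exact hvw) hvT
    · exact Set.subset_preimage_image q T
  have hqopen : ∀ T : Set (Quotient (famSetoid P)), IsOpen (q ⁻¹' T) → IsOpen T :=
    fun T h => (isQuotientMap_quot_mk).isOpen_preimage.1 h
  -- open map
  have hopen : IsOpenMap q := by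
    intro G hG
    apply hqopen
    have him : q ⁻¹' (q '' G) = {w | ∃ v ∈ G, ∀ V ∈ P, (v ∈ V ↔ w ∈ V)} := by
      ext w
      constructor
      · rintro ⟨v, hvG, hvw⟩
        exact ⟨v, hvG, Quotient.exact hvw⟩
      · rintro ⟨v, hvG, hvw⟩
        exact ⟨v, hvG, Quotient.sound hvw⟩
    rw [him, isOpen_iff_forall_mem_open]
    rintro x ⟨y, hyG, hyx⟩
    obtain ⟨F, hFP, hFfin, hxF, hFsub⟩ := exists_basic hB hs hPB hPwcr hPs hG hyG hyx
    exact ⟨⋂₀ F, hFsub, hFfin.isOpen_sInter fun W hW => hB.1 W (hPB (hFP hW)), hxF⟩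
  -- Hausdorff
  have hT2 : T2Space (Quotient (famSetoid P)) := by
    have main : ∀ a b : X, ∀ V ∈ P, a ∈ V → b ∉ V →
        ∃ u v : Set (Quotient (famSetoid P)), IsOpen u ∧ IsOpen v ∧
          q a ∈ u ∧ q b ∈ v ∧ Disjoint u v := by
      intro a b V hV ha hb
      obtain ⟨S₁, S₂, hS₁P, hS₂P, _, _, ha1, hb2, hd⟩ := wcr_sep_pair hPwcr hV ha hb
      have hsat₁ : ∀ a' b' : X, (∀ V ∈ P, (a' ∈ V ↔ b' ∈ V)) → a' ∈ ⋃₀ S₁ → b' ∈ ⋃₀ S₁ := by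
        rintro a' b' hab ⟨W, hW, haW⟩
        exact ⟨W, hW, (hab W (hS₁P hW)).1 haW⟩
      have hsat₂ : ∀ a' b' : X, (∀ V ∈ P, (a' ∈ V ↔ b' ∈ V)) → a' ∈ ⋃₀ S₂ → b' ∈ ⋃₀ S₂ := by
        rintro a' b' hab ⟨W, hW, haW⟩
        exact ⟨W, hW, (hab W (hS₂P hW)).1 haW⟩
      refine ⟨q '' ⋃₀ S₁, q '' ⋃₀ S₂, ?_, ?_, ⟨a, ha1, rfl⟩, ⟨b, hb2, rfl⟩, ?_⟩
      · apply hqopen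
        rw [hsatpre _ hsat₁]
        exact isOpen_sUnion fun W hW => hB.1 W (hPB (hS₁P hW))
      · apply hqopen
        rw [hsatpre _ hsat₂]
        exact isOpen_sUnion fun W hW => hB.1 W (hPB (hS₂P hW))
      · rw [Set.disjoint_left]
        rintro ζ ⟨u₁, hu₁, rfl⟩ ⟨u₂, hu₂, hequ⟩
        exact Set.disjoint_left.1 hd hu₁
          (hsat₂ u₂ u₁ (Quotient.exact hequ) hu₂)
    constructor
    intro ζ₁ ζ₂ hne
    obtain ⟨a, rfl⟩ := hsurj ζ₁
    obtain ⟨b, rfl⟩ := hsurj ζ₂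
    have hnr : ¬ ∀ V ∈ P, (a ∈ V ↔ b ∈ V) := fun h => hne (Quotient.sound h)
    push_neg at hnr
    obtain ⟨V, hV, hVne⟩ := hnr
    rcases hVne with ⟨haV, hbV⟩ | ⟨haV, hbV⟩
    · exact main a b V hV haV hbV
    · obtain ⟨u, v, hu, hv, hbu, hav, hd⟩ := main b a V hV hbV haV
      exact ⟨v, u, hv, hu, hav, hbu, hd.symm⟩
  -- compactness
  have hcomp : CompactSpace (Quotient (famSetoid P)) := by
    constructor
    rw [← hsurj.range_eq, ← Set.image_univ]
    exact isCompact_univ.image hcont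
  -- second countability
  haveI := hT2
  haveI := hcomp
  have hbasis : TopologicalSpace.IsTopologicalBasis
      {T : Set (Quotient (famSetoid P)) |
        ∃ F ∈ {F : Set (Set X) | F.Finite ∧ F ⊆ P}, T = q '' ⋂₀ F} := by
    refine TopologicalSpace.isTopologicalBasis_of_isOpen_of_nhds ?_ ?_
    · rintro T ⟨F, ⟨hFfin, hFP⟩, rfl⟩
      have hsatF : ∀ a b : X, (∀ V ∈ P, (a ∈ V ↔ b ∈ V)) → a ∈ ⋂₀ F → b ∈ ⋂₀ F := by
        intro a b hab ha W hW
        exact (hab W (hFP hW)).1 (ha W hW)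
      apply hqopen
      rw [hsatpre _ hsatF]
      exact hFfin.isOpen_sInter fun W hW => hB.1 W (hPB (hFP hW))
    · intro ζ T hζT hT
      obtain ⟨a, rfl⟩ := hsurj ζ
      have hG : IsOpen (q ⁻¹' T) := hT.preimage hcont
      obtain ⟨F, hFP, hFfin, haF, hFsub⟩ :=
        exists_basic hB hs hPB hPwcr hPs hG (hζT : a ∈ q ⁻¹' T) (fun V hV => Iff.rfl)
      refine ⟨q '' ⋂₀ F, ⟨F, ⟨hFfin, hFP⟩, rfl⟩, ⟨a, haF, rfl⟩, ?_⟩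
      rintro _ ⟨w, hwF, rfl⟩
      obtain ⟨v, hvG, hvw⟩ := hFsub w hwF
      have heq : q w = q v := (Quotient.sound hvw).symm
      have : q v ∈ T := hvG
      rw [heq]
      exact this
  have hcnt : {T : Set (Quotient (famSetoid P)) |
      ∃ F ∈ {F : Set (Set X) | F.Finite ∧ F ⊆ P}, T = q '' ⋂₀ F}.Countable := by
    have h1 : {F : Set (Set X) | F.Finite ∧ F ⊆ P}.Countable :=
      Set.countable_setOf_finite_subset hPcount
    have h2 : {T : Set (Quotient (famSetoid P)) |
        ∃ F ∈ {F : Set (Set X) | F.Finite ∧ F ⊆ P}, T = q '' ⋂₀ F} =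
        (fun F : Set (Set X) => q '' ⋂₀ F) '' {F : Set (Set X) | F.Finite ∧ F ⊆ P} := by
      ext T
      constructor
      · rintro ⟨F, hF, rfl⟩
        exact ⟨F, hF, rfl⟩
      · rintro ⟨F, hF, rfl⟩
        exact ⟨F, hF, rfl⟩
    rw [h2]
    exact h1.image _
  haveI : SecondCountableTopology (Quotient (famSetoid P)) :=
    hbasis.secondCountableTopology hcnt
  have hmetr : TopologicalSpace.MetrizableSpace (Quotient (famSetoid P)) := inferInstance
  exact ⟨hcont, hopen, hsurj, hcomp, hmetr⟩
end

section
/- If X is an infinite regular Hausdorff (T3) topological space, then the family RO(X) of all regular open subsets of X does not have the FNS property. -/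
section Aux

open Set

variable {X : Type*} [TopologicalSpace X]

/-- `interior (closure A)` is regular open when `A` is open. -/
lemma aux_regOpen (A : Set X) (hA : IsOpen A) :
    interior (closure (interior (closure A))) = interior (closure A) := by
  have h1 : A ⊆ interior (closure A) := interior_maximal subset_closure hA
  have h2 : closure (interior (closure A)) = closure A :=
    subset_antisymm (closure_minimal interior_subset isClosed_closure)
      (closure_mono h1)
  rw [h2]

lemma aux_step [T3Space X] {O : Set X} (hO : IsOpen O) (hinf : O.Infinite) :
    ∃ U O' : Set X, IsOpen U ∧ U.Nonempty ∧ U ⊆ O ∧ IsOpen O' ∧ O'.Infinite ∧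
      O' ⊆ O ∧ Disjoint U O' := by
  obtain ⟨x, hx, y, hy, hxy⟩ := hinf.nontrivial
  obtain ⟨A, B, hAo, hBo, hxA, hyB, hAB⟩ := t2_separation hxy
  obtain ⟨t, ht, htc, htsub⟩ :=
    exists_mem_nhds_isClosed_subset ((hAo.inter hO).mem_nhds ⟨hxA, hx⟩)
  obtain ⟨u, hu, huc, husub⟩ :=
    exists_mem_nhds_isClosed_subset ((hBo.inter hO).mem_nhds ⟨hyB, hy⟩)
  set Vx := interior t with hVx
  set Vy := interior u with hVy
  have hxVx : x ∈ Vx := mem_interior_iff_mem_nhds.mpr ht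
  have hyVy : y ∈ Vy := mem_interior_iff_mem_nhds.mpr hu
  have hclx : closure Vx ⊆ A ∩ O := (closure_minimal interior_subset htc).trans htsub
  have hcly : closure Vy ⊆ B ∩ O := (closure_minimal interior_subset huc).trans husub
  have hVxO : Vx ⊆ O := fun z hz => (hclx (subset_closure hz)).2
  have hVyO : Vy ⊆ O := fun z hz => (hcly (subset_closure hz)).2
  have hsplit : O ⊆ (O \ closure Vx) ∪ (O \ closure Vy) := by
    intro z hz
    by_cases hzx : z ∈ closure Vx
    · exact Or.inr ⟨hz, fun hzy => hAB.ne_of_mem (hclx hzx).1 (hcly hzy).1 rfl⟩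
    · exact Or.inl ⟨hz, hzx⟩
  rcases Set.infinite_union.mp (hinf.mono hsplit) with h | h
  · exact ⟨Vx, O \ closure Vx, isOpen_interior, ⟨x, hxVx⟩, hVxO,
      hO.sdiff isClosed_closure, h, Set.diff_subset,
      Set.disjoint_left.mpr fun z hz hz' => hz'.2 (subset_closure hz)⟩
  · exact ⟨Vy, O \ closure Vy, isOpen_interior, ⟨y, hyVy⟩, hVyO,
      hO.sdiff isClosed_closure, h, Set.diff_subset,
      Set.disjoint_left.mpr fun z hz hz' => hz'.2 (subset_closure hz)⟩

lemma aux_disjoint_opens [T3Space X] [Infinite X] :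
    ∃ V : ℕ → Set X, (∀ n, IsOpen (V n)) ∧ (∀ n, (V n).Nonempty) ∧
      ∀ m n, m ≠ n → Disjoint (V m) (V n) := by
  classical
  let P := {O : Set X // IsOpen O ∧ O.Infinite}
  have key : ∀ p : P, ∃ q : Set X × P, IsOpen q.1 ∧ q.1.Nonempty ∧
      q.1 ⊆ p.1 ∧ q.2.1 ⊆ p.1 ∧ Disjoint q.1 q.2.1 := by
    rintro ⟨O, hO, hinf⟩
    obtain ⟨U, O', h1, h2, h3, h4, h5, h6, h7⟩ := aux_step hO hinf
    exact ⟨⟨U, ⟨O', h4, h5⟩⟩, h1, h2, h3, h6, h7⟩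
  choose F hF1 hF2 hF3 hF4 hF5 using key
  let O : ℕ → P := fun n => Nat.rec ⟨Set.univ, isOpen_univ, Set.infinite_univ⟩
    (fun _ p => (F p).2) n
  have hOsucc : ∀ n, O (n + 1) = (F (O n)).2 := fun _ => rfl
  have hstep : ∀ n, (O (n + 1)).1 ⊆ (O n).1 := fun n => by
    rw [hOsucc n]; exact hF4 (O n)
  have hmono : ∀ n m, n ≤ m → (O m).1 ⊆ (O n).1 := by
    intro n m hnm
    induction m with
    | zero => cases Nat.le_zero.mp hnm; exact subset_rfl
    | succ k ih =>
      rcases Nat.lt_or_ge n (k + 1) with h | h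
      · exact (hstep k).trans (ih (Nat.lt_succ_iff.mp h))
      · have : n = k + 1 := le_antisymm hnm h
        subst this; exact subset_rfl
  refine ⟨fun n => (F (O n)).1, fun n => hF1 (O n), fun n => hF2 (O n), ?_⟩
  have main : ∀ m n, m < n → Disjoint (F (O m)).1 (F (O n)).1 := by
    intro m n hmn
    have h1 : (F (O n)).1 ⊆ (O (m + 1)).1 :=
      (hF3 (O n)).trans (hOsucc m ▸ hmono (m + 1) n hmn)
    exact ((hOsucc m ▸ hF5 (O m)) : Disjoint (F (O m)).1 (O (m+1)).1).mono_right h1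
  intro m n hmn
  rcases Nat.lt_or_ge m n with h | h
  · exact main m n h
  · exact (main n m (lt_of_le_of_ne h (Ne.symm hmn))).symm

end Aux

/-- In an infinite regular Hausdorff space, the family of all regular open sets
does not have the FNS property. -/
theorem regularOpen_not_hasFNS {X : Type*} [TopologicalSpace X] [T3Space X]
    [Infinite X] :
    ¬ HasFNS {U : Set X | U = interior (closure U)} := by
  classical
  rintro ⟨s, hsfin, hsep⟩
  set RO := {U : Set X | U = interior (closure U)} with hRO
  obtain ⟨V, hVo, hVne, hVd⟩ := aux_disjoint_opens (X := X)
  set U : ℕ → Set X := fun n => interior (closure (V n)) with hU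
  have hUo : ∀ n, IsOpen (U n) := fun _ => isOpen_interior
  have hVUsub : ∀ n, V n ⊆ U n := fun n => interior_maximal subset_closure (hVo n)
  have hUne : ∀ n, (U n).Nonempty := fun n => (hVne n).mono (hVUsub n)
  have hURO : ∀ n, U n ∈ RO := fun n => (aux_regOpen (V n) (hVo n)).symm
  have hUd : ∀ m n, m ≠ n → Disjoint (U m) (U n) := by
    intro m n h
    have d1 : Disjoint (V m) (U n) :=
      (((hVd m n h).closure_right (hVo m)).mono_right interior_subset)
    exact ((d1.symm.closure_right (hUo n)).mono_right interior_subset).symm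
  set M : Set (Set X) := ⋃ n, s (U n) with hM
  have hMc : M.Countable :=
    Set.countable_iUnion (fun n => ((hsfin (U n) (hURO n)).2).countable)
  -- the big regular open sets C S and their complements D S
  set C : Set ℕ → Set X := fun S => interior (closure (⋃ n ∈ S, U n)) with hC
  have hWo : ∀ S : Set ℕ, IsOpen (⋃ n ∈ S, U n) := fun S =>
    isOpen_biUnion (fun n _ => hUo n)
  have hCRO : ∀ S, C S ∈ RO := fun S => (aux_regOpen _ (hWo S)).symm
  have hUC : ∀ S, ∀ n ∈ S, U n ⊆ C S := by
    intro S n hn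
    exact (Set.subset_biUnion_of_mem hn).trans
      (interior_maximal subset_closure (hWo S))
  have hUdC : ∀ S, ∀ n, n ∉ S → Disjoint (U n) (closure (C S)) := by
    intro S n hn
    have d1 : Disjoint (U n) (⋃ m ∈ S, U m) := by
      refine Set.disjoint_iUnion₂_right.mpr fun m hm => ?_
      exact hUd n m (fun he => hn (he ▸ hm))
    have d2 : Disjoint (U n) (closure (⋃ m ∈ S, U m)) := d1.closure_right (hUo n)
    have d3 : Disjoint (U n) (C S) := d2.mono_right interior_subset
    exact (d3.closure_right (hUo n))
  set D : Set ℕ → Set X := fun S => (closure (C S))ᶜ with hD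
  have hDRO : ∀ S, D S ∈ RO := by
    intro S
    show D S = interior (closure (D S))
    have h1 : closure (D S) = (C S)ᶜ := by
      rw [hD]
      simp only [closure_compl]
      rw [← (hCRO S)]
    rw [h1, interior_compl]
  have hUDd : ∀ S, ∀ n ∈ S, Disjoint (U n) (D S) := by
    intro S n hn
    exact Set.disjoint_left.mpr fun x hx hx' =>
      hx' (subset_closure (hUC S n hn hx))
  -- the finite fingerprints
  set Φ : Set ℕ → Set (Set X) :=
    fun S => {W | W ∈ s (D S) ∧ W ∈ M ∧ W ⊆ closure (C S)} with hΦ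
  have hΦfin : ∀ S, (Φ S).Finite := fun S =>
    ((hsfin (D S) (hDRO S)).2).subset (fun W hW => hW.1)
  have hΦM : ∀ S, Φ S ⊆ M := fun S W hW => hW.2.1
  have hrec : ∀ S : Set ℕ, S = {n | ((U n) ∩ ⋃₀ Φ S).Nonempty} := by
    intro S
    ext n
    simp only [Set.mem_setOf_eq]
    constructor
    · intro hn
      obtain ⟨WU, ⟨hWU1, hWU2⟩, WV, _, hdisj, hUWU, hDWV⟩ :=
        hsep (U n) (hURO n) (D S) (hDRO S) (hUDd S n hn)
      have hWUsub : WU ⊆ closure (C S) := by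
        intro x hx
        by_contra hxc
        exact (hdisj.ne_of_mem hx (hDWV hxc)) rfl
      have hWUΦ : WU ∈ Φ S := ⟨hWU2, Set.mem_iUnion.mpr ⟨n, hWU1⟩, hWUsub⟩
      obtain ⟨x, hx⟩ := hUne n
      exact ⟨x, hx, Set.mem_sUnion.mpr ⟨WU, hWUΦ, hUWU hx⟩⟩
    · intro ⟨x, hxU, hxW⟩
      obtain ⟨W, hWΦ, hxW⟩ := hxW
      by_contra hn
      exact (hUdC S n hn).ne_of_mem hxU (hWΦ.2.2 hxW) rfl
  have hΦinj : Function.Injective Φ := by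
    intro S₁ S₂ h
    rw [hrec S₁, hrec S₂, h]
  -- cardinality contradiction
  haveI : Countable {t : Set (Set X) // t.Finite ∧ t ⊆ M} :=
    (Set.countable_setOf_finite_subset hMc).to_subtype
  have hΨ : Function.Injective
      (fun S : Set ℕ => (⟨Φ S, hΦfin S, hΦM S⟩ : {t : Set (Set X) // t.Finite ∧ t ⊆ M})) := by
    intro S₁ S₂ h
    exact hΦinj (congrArg Subtype.val h)
  haveI : Countable (Set ℕ) := hΨ.countable
  obtain ⟨f, hf⟩ := exists_injective_nat (Set ℕ)
  exact Function.cantor_injective f hf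
end

section
/- If X is an infinite regular Hausdorff (T3) topological space, then the topology of X (the family of all open subsets of X) does not have the FNS property. -/
/-- In an infinite T3 space, every infinite open set contains a nonempty open cell
together with an infinite open remainder disjoint from it. -/
lemma cell_step {X : Type*} [TopologicalSpace X] [T3Space X]
    (O : Set X) (hO : IsOpen O) (hInf : O.Infinite) :
    ∃ C O' : Set X, IsOpen C ∧ C.Nonempty ∧ C ⊆ O ∧
      IsOpen O' ∧ O'.Infinite ∧ O' ⊆ O ∧ Disjoint C O' := by
  obtain ⟨a, haO, b, hbO, hab⟩ := hInf.nontrivial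
  obtain ⟨U, V, hU, hV, haU, hbV, hUV⟩ := t2_separation hab
  have hmem : U ∩ O ∈ nhds a := (hU.inter hO).mem_nhds ⟨haU, haO⟩
  obtain ⟨N', hN'mem, hN'closed, hN'sub⟩ := exists_mem_nhds_isClosed_subset hmem
  set N := interior N' with hN
  have haN : a ∈ N := mem_interior_iff_mem_nhds.2 hN'mem
  have hclN : closure N ⊆ N' := closure_minimal interior_subset hN'closed
  by_cases hcase : (O \ closure N).Infinite
  · exact ⟨N, O \ closure N, isOpen_interior, ⟨a, haN⟩,
      fun x hx => (hN'sub (hclN (subset_closure hx))).2,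
      hO.sdiff isClosed_closure, hcase, Set.diff_subset,
      Set.disjoint_left.2 fun x hx hx' => hx'.2 (subset_closure hx)⟩
  · have h1 : (O ∩ closure N).Infinite := by
      have := hInf.diff (Set.not_infinite.1 hcase)
      rwa [Set.diff_diff_right_self] at this
    have h2 : (U ∩ O).Infinite := h1.mono (fun x hx => hN'sub (hclN hx.2))
    exact ⟨V ∩ O, U ∩ O, hV.inter hO, ⟨b, hbV, hbO⟩, Set.inter_subset_right,
      hU.inter hO, h2, Set.inter_subset_right,
      (hUV.symm.mono Set.inter_subset_left Set.inter_subset_left)⟩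

/-- An infinite T3 space has an infinite cellular family with chosen points. -/
lemma exists_cellular {X : Type*} [TopologicalSpace X] [T3Space X] [Infinite X] :
    ∃ (x : ℕ → X) (C : ℕ → Set X), (∀ n, IsOpen (C n)) ∧ (∀ n, x n ∈ C n) ∧
      ∀ m n, m ≠ n → Disjoint (C m) (C n) := by
  have hstep : ∀ t : {O : Set X // IsOpen O ∧ O.Infinite},
      ∃ p : Set X × {O : Set X // IsOpen O ∧ O.Infinite},
        IsOpen p.1 ∧ p.1.Nonempty ∧ p.1 ⊆ t.1 ∧ p.2.1 ⊆ t.1 ∧ Disjoint p.1 p.2.1 := by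
    intro t
    obtain ⟨Cs, O', h1, h2, h3, h4, h5, h6, h7⟩ := cell_step t.1 t.2.1 t.2.2
    exact ⟨⟨Cs, ⟨O', h4, h5⟩⟩, h1, h2, h3, h6, h7⟩
  choose p hp1 hp2 hp3 hp4 hp5 using hstep
  let g : ℕ → {O : Set X // IsOpen O ∧ O.Infinite} := fun n =>
    Nat.rec ⟨Set.univ, isOpen_univ, Set.infinite_univ⟩ (fun _ t => (p t).2) n
  have hg : ∀ n, g (n + 1) = (p (g n)).2 := fun n => rfl
  set C : ℕ → Set X := fun n => (p (g n)).1 with hC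
  have hne : ∀ n, (C n).Nonempty := fun n => hp2 (g n)
  choose x hx using hne
  have hsub : ∀ n, (g (n + 1)).1 ⊆ (g n).1 := fun n => hp4 (g n)
  have hmono : ∀ m k, (g (m + k)).1 ⊆ (g m).1 := by
    intro m k
    induction k with
    | zero => exact fun y hy => hy
    | succ k ih => exact fun y hy => ih (hsub (m + k) hy)
  have hlt : ∀ m n, m < n → Disjoint (C m) (C n) := by
    intro m n hmn
    have h1 : C n ⊆ (g n).1 := hp3 (g n)
    have h2 : (g n).1 ⊆ (g (m + 1)).1 := by
      obtain ⟨k, rfl⟩ := Nat.exists_eq_add_of_le hmn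
      exact hmono (m + 1) k
    have h3 : Disjoint (C m) ((g (m + 1)).1) := by
      rw [hg m]; exact hp5 (g m)
    exact h3.mono_right (fun y hy => h2 (h1 hy))
  refine ⟨x, C, fun n => hp1 (g n), hx, fun m n hmn => ?_⟩
  rcases lt_or_gt_of_ne hmn with h | h
  · exact hlt m n h
  · exact (hlt n m h).symm

/-- In an infinite regular Hausdorff space, the topology does not have the FNS
property. -/
theorem topology_not_hasFNS {X : Type*} [TopologicalSpace X] [T3Space X]
    [Infinite X] :
    ¬ HasFNS {U : Set X | IsOpen U} := by
  rintro ⟨s, h1, h2⟩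
  obtain ⟨x, C, hopen, hxmem, hdis⟩ := exists_cellular (X := X)
  have key : ∀ U V : Set X, IsOpen U → IsOpen V → Disjoint U V →
      ∃ W, W ∈ s U ∧ W ∈ s V ∧ U ⊆ W ∧ Disjoint W V := by
    intro U V hU hV hUV
    obtain ⟨WU, hWU, WV, hWV, hWdis, hUW, hVW⟩ := h2 U hU V hV hUV
    exact ⟨WU, hWU.1, hWU.2, hUW, hWdis.mono_right hVW⟩
  set G : Set ℕ → Set X := fun S => ⋃ n ∈ S, C n with hGdef
  have hGopen : ∀ S, IsOpen (G S) := fun S => isOpen_biUnion fun n _ => hopen n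
  have hGmem : ∀ (S : Set ℕ) (n : ℕ), n ∈ S → x n ∈ G S := fun S n hn =>
    Set.mem_biUnion hn (hxmem n)
  have hGdis : ∀ S T : Set ℕ, Disjoint S T → Disjoint (G S) (G T) := by
    intro S T hST
    rw [Set.disjoint_left]
    intro y hyS hyT
    simp only [hGdef, Set.mem_iUnion] at hyS hyT
    obtain ⟨n, hnS, hyn⟩ := hyS
    obtain ⟨m, hmT, hym⟩ := hyT
    rcases eq_or_ne n m with rfl | hnm
    · exact Set.disjoint_left.1 hST hnS hmT
    · exact Set.disjoint_left.1 (hdis n m hnm) hyn hym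
  have main : ∀ D : Set ℕ, ∃ w : Set X,
      (∃ k : ℕ, w ∈ s (G (D ∩ Set.Iic k))) ∧ {n | x n ∈ w} = D := by
    intro D
    have hdisj : ∀ k : ℕ, Disjoint (G (D ∩ Set.Iic k)) (G Dᶜ) := fun k =>
      hGdis _ _ (Set.disjoint_left.2 fun n hn hn' => hn' hn.1)
    have hW : ∀ k : ℕ, ∃ W, W ∈ s (G (D ∩ Set.Iic k)) ∧ W ∈ s (G Dᶜ) ∧
        G (D ∩ Set.Iic k) ⊆ W ∧ Disjoint W (G Dᶜ) := fun k =>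
      key _ _ (hGopen _) (hGopen _) (hdisj k)
    choose W hW1 hW2 hW3 hW4 using hW
    have hsfin : (s (G Dᶜ)).Finite := (h1 _ (hGopen _)).2
    have hpig : ∃ w ∈ s (G Dᶜ), {k | W k = w}.Infinite := by
      by_contra hcon
      push_neg at hcon
      have hcover : (Set.univ : Set ℕ) ⊆ ⋃ w ∈ s (G Dᶜ), {k | W k = w} := fun k _ =>
        Set.mem_biUnion (hW2 k) rfl
      exact Set.infinite_univ
        ((hsfin.biUnion fun w hw => (hcon w hw)).subset hcover)
    obtain ⟨w, hw, hK⟩ := hpig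
    obtain ⟨k0, hk0⟩ := hK.nonempty
    refine ⟨w, ⟨k0, hk0 ▸ hW1 k0⟩, ?_⟩
    ext n
    simp only [Set.mem_setOf_eq]
    constructor
    · intro hn
      by_contra hnD
      exact Set.disjoint_left.1 (hk0 ▸ hW4 k0) hn (hGmem Dᶜ n hnD)
    · intro hnD
      obtain ⟨k, hkK, hnk⟩ := hK.exists_gt n
      have hx : x n ∈ G (D ∩ Set.Iic k) := hGmem _ n ⟨hnD, le_of_lt hnk⟩
      exact hkK ▸ hW3 k hx
  choose w hkex htrace using main
  choose k hk using hkex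
  have hinj : Function.Injective w := by
    intro D1 D2 h
    rw [← htrace D1, ← htrace D2, h]
  have h𝒮c : (⋃ F : Finset ℕ, s (G ↑F)).Countable :=
    Set.countable_iUnion fun F => ((h1 _ (hGopen _)).2).countable
  have hmem𝒮 : ∀ D : Set ℕ, w D ∈ ⋃ F : Finset ℕ, s (G ↑F) := by
    intro D
    have hfin : (D ∩ Set.Iic (k D)).Finite := (Set.finite_Iic (k D)).inter_of_right D
    refine Set.mem_iUnion.2 ⟨hfin.toFinset, ?_⟩
    rw [Set.Finite.coe_toFinset]
    exact hk D
  obtain ⟨f, hf⟩ := Set.countable_iff_exists_injective.1 h𝒮c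
  exact Function.cantor_injective (fun D => f ⟨w D, hmem𝒮 D⟩)
    (fun D1 D2 h => hinj (Subtype.mk_eq_mk.1 (hf h)))
end

section
/- If X is an infinite regular Hausdorff (T3) topological space, then the topology of X (the family of all open subsets of X) does not have the FN property. -/
open Set

private lemma fn_step {X : Type*} [TopologicalSpace X] [T3Space X] {Y A : Set X}
    (hY : IsOpen Y) (hAY : A ⊆ Y) (hA : A.Infinite) :
    ∃ G Y' : Set X, IsOpen G ∧ G.Nonempty ∧ G ⊆ Y ∧ IsOpen Y' ∧ Y' ⊆ Y ∧
      Disjoint G Y' ∧ (A ∩ Y').Infinite := by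
  obtain ⟨a, ha, b, hb, hab⟩ := hA.nontrivial
  have hO : IsOpen (Y \ {b}) := hY.sdiff isClosed_singleton
  have haO : a ∈ Y \ {b} := ⟨hAY ha, hab⟩
  obtain ⟨t, ht, htc, hts⟩ := exists_mem_nhds_isClosed_subset (hO.mem_nhds haO)
  set U := interior t with hUdef
  have hU : IsOpen U := isOpen_interior
  have haU : a ∈ U := mem_interior_iff_mem_nhds.2 ht
  have hclU : closure U ⊆ t := closure_minimal interior_subset htc
  have hclUY : closure U ⊆ Y := fun x hx => (hts (hclU hx)).1
  have hbU : b ∉ closure U := fun h => (hts (hclU h)).2 rfl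
  by_cases hinf : (A \ closure U).Infinite
  · refine ⟨U, Y \ closure U, hU, ⟨a, haU⟩, fun x hx => hclUY (subset_closure hx),
      hY.sdiff isClosed_closure, diff_subset, ?_, ?_⟩
    · exact Set.disjoint_left.2 fun x hx hx' => hx'.2 (subset_closure hx)
    · exact hinf.mono fun x hx => ⟨hx.1, hAY hx.1, hx.2⟩
  · have h1 : (A ∩ closure U).Infinite := by
      have hsub : A ⊆ (A \ closure U) ∪ (A ∩ closure U) := by
        intro x hx
        by_cases hxc : x ∈ closure U
        · exact Or.inr ⟨hx, hxc⟩
        · exact Or.inl ⟨hx, hxc⟩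
      intro hfin
      exact hA (((Set.not_infinite.1 hinf).union hfin).subset hsub)
    have hbO : b ∈ Y \ closure U := ⟨hAY hb, hbU⟩
    have hO2 : IsOpen (Y \ closure U) := hY.sdiff isClosed_closure
    obtain ⟨t', ht', htc', hts'⟩ := exists_mem_nhds_isClosed_subset (hO2.mem_nhds hbO)
    set W := interior t' with hWdef
    have hW : IsOpen W := isOpen_interior
    have hbW : b ∈ W := mem_interior_iff_mem_nhds.2 ht'
    have hclW : closure W ⊆ t' := closure_minimal interior_subset htc'
    have hclWY : closure W ⊆ Y \ closure U := fun x hx => hts' (hclW hx)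
    refine ⟨W, Y \ closure W, hW, ⟨b, hbW⟩,
      fun x hx => (hclWY (subset_closure hx)).1,
      hY.sdiff isClosed_closure, diff_subset, ?_, ?_⟩
    · exact Set.disjoint_left.2 fun x hx hx' => hx'.2 (subset_closure hx)
    · refine h1.mono fun x hx => ⟨hx.1, hAY hx.1, fun hxW => ?_⟩
      exact (hclWY hxW).2 hx.2

private lemma fn_exists_cellular {X : Type*} [TopologicalSpace X] [T3Space X] [Infinite X] :
    ∃ G : ℕ → Set X, (∀ n, IsOpen (G n)) ∧ (∀ n, (G n).Nonempty) ∧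
      ∀ m n, m ≠ n → Disjoint (G m) (G n) := by
  classical
  let S := {p : Set X × Set X // IsOpen p.1 ∧ p.2 ⊆ p.1 ∧ p.2.Infinite}
  have key : ∀ s : S, ∃ q : Set X × S,
      IsOpen q.1 ∧ q.1.Nonempty ∧ q.1 ⊆ s.1.1 ∧ q.2.1.1 ⊆ s.1.1 ∧ Disjoint q.1 q.2.1.1 := by
    rintro ⟨⟨Y, A⟩, hY, hAY, hA⟩
    obtain ⟨G, Y', hG, hGne, hGY, hY', hY'Y, hd, hinf⟩ := fn_step hY hAY hA
    exact ⟨(G, ⟨(Y', A ∩ Y'), hY', inter_subset_right, hinf⟩), hG, hGne, hGY, hY'Y, hd⟩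
  choose f hf1 hf2 hf3 hf4 hf5 using key
  let s0 : S := ⟨(Set.univ, Set.univ), isOpen_univ, subset_rfl, Set.infinite_univ⟩
  let seq : ℕ → S := fun n => Nat.rec s0 (fun _ s => (f s).2) n
  have hmono : ∀ m n, m ≤ n → (seq n).1.1 ⊆ (seq m).1.1 := by
    intro m n hmn
    induction n with
    | zero => obtain rfl := Nat.le_zero.1 hmn; exact subset_rfl
    | succ k ih =>
      rcases Nat.eq_or_lt_of_le hmn with rfl | h
      · exact subset_rfl
      · exact (hf4 (seq k)).trans (ih (Nat.lt_succ_iff.1 h))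
  refine ⟨fun n => (f (seq n)).1, fun n => hf1 (seq n), fun n => hf2 (seq n), ?_⟩
  have hdisj : ∀ m n, m < n → Disjoint ((f (seq m)).1) ((f (seq n)).1) := by
    intro m n hmn
    refine (hf5 (seq m)).mono_right ?_
    exact (hf3 (seq n)).trans (hmono (m + 1) n hmn)
  intro m n hmn
  rcases lt_or_gt_of_ne hmn with h | h
  · exact hdisj m n h
  · exact (hdisj n m h).symm

/-- In an infinite regular Hausdorff space, the topology does not have the FN
property. -/
theorem topology_not_hasFN {X : Type*} [TopologicalSpace X] [T3Space X]
    [Infinite X] :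
    ¬ HasFN {U : Set X | IsOpen U} := by
  rintro ⟨u, l, hu, hl, hul⟩
  obtain ⟨G0, hG0o, hG0ne, hG0d⟩ := fn_exists_cellular (X := X)
  let e : ℚ ≃ ℕ := Denumerable.eqv ℚ
  set G : ℚ → Set X := fun q => G0 (e q) with hGdef
  have hGo : ∀ q, IsOpen (G q) := fun q => hG0o _
  have hGne : ∀ q, (G q).Nonempty := fun q => hG0ne _
  have hGd : ∀ p q : ℚ, p ≠ q → Disjoint (G p) (G q) :=
    fun p q h => hG0d _ _ fun hh => h (e.injective hh)
  set V : ℝ → Set X := fun r => ⋃ q : ℚ, ⋃ _ : (q : ℝ) < r, G q with hVdef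
  have hVo : ∀ r, IsOpen (V r) :=
    fun r => isOpen_iUnion fun q => isOpen_iUnion fun _ => hGo q
  have hVmem : ∀ r, V r ∈ {U : Set X | IsOpen U} := fun r => hVo r
  have hGsubV : ∀ (q : ℚ) (r : ℝ), (q : ℝ) < r → G q ⊆ V r := by
    intro q r h
    exact subset_iUnion_of_subset q (subset_iUnion_of_subset h subset_rfl)
  have hVmono : ∀ r s : ℝ, r ≤ s → V r ⊆ V s := by
    intro r s hrs
    refine iUnion_subset fun q => iUnion_subset fun hq => ?_
    exact hGsubV q s (lt_of_lt_of_le hq hrs)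
  have hVrUmem : ∀ x (r : ℝ), x ∈ V r → ∃ q : ℚ, (q : ℝ) < r ∧ x ∈ G q := by
    intro x r hx
    simp only [hVdef, mem_iUnion] at hx
    obtain ⟨q, hq, hxq⟩ := hx
    exact ⟨q, hq, hxq⟩
  -- key step: codes for irrationals
  have key : ∀ r : ℝ, Irrational r → ∃ qc : ℚ, ∃ Uw : Set X, Uw ∈ l (V qc) ∧
      ∀ p : ℚ, (G p ∩ Uw).Nonempty ↔ (p : ℝ) < r := by
    intro r hr
    have hex : ∀ n : ℕ, ∃ q : ℚ, r < (q : ℝ) ∧ (q : ℝ) < r + 1 / (n + 1) := by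
      intro n
      have h1 : (0 : ℝ) < 1 / (n + 1) := by positivity
      exact exists_rat_btwn (by linarith)
    choose s hs1 hs2 using hex
    have hsub : ∀ n, V r ⊆ V (s n) := fun n => hVmono _ _ (le_of_lt (hs1 n))
    have hW : ∀ n : ℕ, (u (V r) ∩ l (V (s n))).Nonempty :=
      fun n => hul (V r) (hVmem r) (V (s n)) (hVmem _) (hsub n)
    choose U hU using hW
    have hUu : ∀ n, U n ∈ u (V r) := fun n => (hU n).1
    have hUl : ∀ n, U n ∈ l (V (s n)) := fun n => (hU n).2
    have hufin : (u (V r)).Finite := (hu (V r) (hVmem r)).1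
    haveI : Finite ↥(u (V r)) := hufin.to_subtype
    obtain ⟨y, hy⟩ :=
      Finite.exists_infinite_fiber (fun n : ℕ => (⟨U n, hUu n⟩ : ↥(u (V r))))
    have hNinf : {n : ℕ | U n = (y : Set X)}.Infinite := by
      refine (Set.infinite_coe_iff.mp hy).mono fun n hn => ?_
      exact congrArg Subtype.val hn
    set Uw : Set X := (y : Set X) with hUwdef
    have hVrUw : V r ⊆ Uw := ((hu (V r) (hVmem r)).2 Uw y.2).2
    have hUwl : ∀ n, U n = Uw → Uw ∈ l (V (s n)) := fun n hn => hn ▸ hUl n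
    have hUwsub : ∀ n, U n = Uw → Uw ⊆ V (s n) := by
      intro n hn
      have := ((hl (V (s n)) (hVmem _)).2 (U n) (hUl n)).2
      rwa [hn] at this
    have hσ : ∀ p : ℚ, (G p ∩ Uw).Nonempty ↔ (p : ℝ) < r := by
      intro p
      constructor
      · rintro ⟨x, hxG, hxU⟩
        have hple : ∀ n, U n = Uw → (p : ℝ) < s n := by
          intro n hn
          obtain ⟨q, hq, hxq⟩ := hVrUmem x (s n) (hUwsub n hn hxU)
          have hpq : p = q := by
            by_contra hpq
            exact Set.disjoint_left.1 (hGd p q hpq) hxG hxq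
          rwa [hpq]
        by_contra hpr
        push_neg at hpr
        have hrp : r < (p : ℝ) := lt_of_le_of_ne hpr fun h => hr ⟨p, h.symm⟩
        obtain ⟨n0, hn0⟩ := exists_nat_gt (1 / ((p : ℝ) - r))
        obtain ⟨n, hnN, hnn⟩ := hNinf.exists_gt n0
        have hpos : (0 : ℝ) < (p : ℝ) - r := by linarith
        have hlarge : 1 / ((p : ℝ) - r) < (n : ℝ) + 1 := by
          have : (n0 : ℝ) < (n : ℝ) := by exact_mod_cast hnn
          linarith
        have h2 : (1 : ℝ) / (n + 1) < (p : ℝ) - r := by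
          rw [div_lt_iff₀ (by positivity)]
          rw [div_lt_iff₀ hpos] at hlarge
          linarith
        have h3 := hple n hnN
        have h4 := hs2 n
        linarith
      · intro hp
        obtain ⟨x, hx⟩ := hGne p
        exact ⟨x, hx, hVrUw (hGsubV p r hp hx)⟩
    obtain ⟨n0, hn0⟩ := hNinf.nonempty
    exact ⟨s n0, Uw, hUwl n0 hn0, hσ⟩
  choose qc Uw hUwl hUwσ using key
  set T : Set (ℚ × Set X) := ⋃ q : ℚ, (fun W => ((q : ℚ), W)) '' l (V q) with hTdef
  have hT : T.Countable :=
    countable_iUnion fun q => (((hl (V q) (hVmem q)).1).image _).countable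
  set J : {r : ℝ // Irrational r} → ℚ × Set X :=
    fun r => (qc r.1 r.2, Uw r.1 r.2) with hJdef
  have hJT : ∀ r, J r ∈ T := by
    intro r
    exact mem_iUnion.2 ⟨qc r.1 r.2, ⟨Uw r.1 r.2, hUwl r.1 r.2, rfl⟩⟩
  have hJinj : Function.Injective J := by
    rintro ⟨r, hr⟩ ⟨r', hr'⟩ h
    have hUeq : Uw r hr = Uw r' hr' := congrArg Prod.snd h
    have hiff : ∀ p : ℚ, ((p : ℝ) < r ↔ (p : ℝ) < r') := fun p => by
      rw [← hUwσ r hr p, hUeq, hUwσ r' hr' p]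
    apply Subtype.ext
    by_contra hne
    rcases lt_or_gt_of_ne hne with hlt | hlt
    · obtain ⟨p, hp1, hp2⟩ := exists_rat_btwn hlt
      exact absurd ((hiff p).2 hp2) (not_lt.2 (le_of_lt hp1))
    · obtain ⟨p, hp1, hp2⟩ := exists_rat_btwn hlt
      exact absurd ((hiff p).1 hp2) (not_lt.2 (le_of_lt hp1))
  haveI hcT : Countable ↥T := hT.to_subtype
  have hinj2 : Function.Injective
      (fun r : {r : ℝ // Irrational r} => (⟨J r, hJT r⟩ : ↥T)) :=
    fun a b h => hJinj (congrArg Subtype.val h)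
  haveI : Countable {r : ℝ // Irrational r} := hinj2.countable
  have hIrr : {r : ℝ | Irrational r}.Countable := Set.countable_coe_iff.1 this
  have huniv : (Set.univ : Set ℝ).Countable := by
    have hsub : (Set.univ : Set ℝ) ⊆
        Set.range ((↑) : ℚ → ℝ) ∪ {r : ℝ | Irrational r} := by
      intro x _
      by_cases h : x ∈ Set.range ((↑) : ℚ → ℝ)
      · exact Or.inl h
      · exact Or.inr h
    exact Set.Countable.mono hsub ((Set.countable_range _).union hIrr)
  exact Cardinal.not_countable_real huniv
end

section
/- Let X be a compact Hausdorff space with the π-FNS property. Then Player I has a winning strategy in the open-open game on X: there exists a function σ assigning to every finite sequence (D₀,…,D_n) of finite families of nonempty open subsets of X a finite family σ(D₀,…,D_n) of nonempty open subsets of X, such that for every sequence (D_n)_{n∈ℕ} of finite families of nonempty open sets satisfying: for each n and each U ∈ σ(D₀,…,D_{n-1}) there exists V ∈ D_n with V ⊆ U, the union ⋃_{n∈ℕ} ⋃D_n is dense in X. -/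
/-- In a compact Hausdorff space with the π-FNS property, Player I has a
winning strategy in the (finite version of the) open-open game. -/
theorem player_I_winning_strategy_of_piFNS {X : Type*} [TopologicalSpace X]
    [CompactSpace X] [T2Space X] (h : HasPiFNS X) :
    ∃ σ : List (Set (Set X)) → Set (Set X),
      (∀ L : List (Set (Set X)),
        (∀ D ∈ L, D.Finite ∧ ∀ U ∈ D, IsOpen U ∧ U.Nonempty) →
        (σ L).Finite ∧ ∀ U ∈ σ L, IsOpen U ∧ U.Nonempty) ∧
      ∀ D : ℕ → Set (Set X),
        (∀ n, (D n).Finite ∧ ∀ U ∈ D n, IsOpen U ∧ U.Nonempty) →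
        (∀ n, ∀ U ∈ σ (List.ofFn fun i : Fin n => D i), ∃ V ∈ D n, V ⊆ U) →
        Dense (⋃ n, ⋃₀ D n) := by
  classical
  obtain ⟨B, hPiB, s, hs⟩ := h
  have hex : ∀ O : Set X, IsOpen O → O.Nonempty → ∃ V, V ∈ B ∧ V ⊆ O := by
    intro O h1 h2
    obtain ⟨V, hV, hVO⟩ := hPiB.2 O h1 h2
    exact ⟨V, hV, hVO⟩
  choose! pick hpickB hpickSub using hex
  -- the "one-round" move of the strategy
  set stp : Set (Set X) → Set (Set X) → Set (Set X) := fun P D =>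
    (⋃ W ∈ P ∩ B, s W) ∪ pick '' {V | V ∈ D ∧ IsOpen V ∧ V.Nonempty} ∪
      pick '' {O | ∃ F : Set (Set X), F ⊆ P ∩ B ∧ F.Finite ∧ O = ⋂₀ F ∧ O.Nonempty}
    with hstp
  set σ : List (Set (Set X)) → Set (Set X) :=
    fun L => L.foldl (fun acc E => acc ∪ stp acc E) ∅ with hσ
  have hstpB : ∀ P D : Set (Set X), stp P D ⊆ B := by
    intro P D W hW
    rcases hW with (hW | hW) | hW
    · simp only [Set.mem_iUnion, exists_prop] at hW
      obtain ⟨A, hA, hWs⟩ := hW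
      exact (hs.1 A hA.2).1 hWs
    · obtain ⟨V, ⟨hVD, hVo, hVne⟩, rfl⟩ := hW
      exact hpickB V hVo hVne
    · obtain ⟨O, ⟨F, hFPB, hFfin, rfl, hOne⟩, rfl⟩ := hW
      exact hpickB _ (Set.Finite.isOpen_sInter hFfin
        (fun t ht => (hPiB.1 t (hFPB ht).2).1)) hOne
  have hσB : ∀ L, σ L ⊆ B := by
    intro L
    have key : ∀ (init : Set (Set X)), init ⊆ B →
        L.foldl (fun acc E => acc ∪ stp acc E) init ⊆ B := by
      induction L with
      | nil => intro init h; simpa using h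
      | cons E L ih =>
        intro init h
        simpa using ih _ (Set.union_subset h (hstpB _ _))
    simpa [hσ] using key ∅ (Set.empty_subset B)
  have hstpFin : ∀ P D : Set (Set X), P.Finite → D.Finite → (stp P D).Finite := by
    intro P D hP hD
    refine Set.Finite.union (Set.Finite.union ?_ ?_) ?_
    · exact Set.Finite.biUnion (hP.inter_of_left B) (fun W hW => (hs.1 W hW.2).2)
    · exact (hD.subset (fun V hV => hV.1)).image _
    · have h1 : {F : Set (Set X) | F ⊆ P ∩ B}.Finite :=
        Set.Finite.finite_subsets (hP.inter_of_left B)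
      have h2 : {O : Set X | ∃ F : Set (Set X), F ⊆ P ∩ B ∧ F.Finite ∧ O = ⋂₀ F ∧ O.Nonempty}
          ⊆ (fun F : Set (Set X) => ⋂₀ F) '' {F | F ⊆ P ∩ B} := by
        rintro O ⟨F, hF, -, rfl, -⟩
        exact ⟨F, hF, rfl⟩
      exact (((h1.image _).subset h2).image _)
  have hσFin : ∀ L : List (Set (Set X)), (∀ E ∈ L, E.Finite) → (σ L).Finite := by
    intro L hL
    have key : ∀ (init : Set (Set X)), init.Finite →
        (L.foldl (fun acc E => acc ∪ stp acc E) init).Finite := by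
      clear hσ
      induction L with
      | nil => intro init h; simpa using h
      | cons E L ih =>
        intro init h
        have hE : E.Finite := hL E (List.mem_cons_self (a := E) (l := L))
        have := ih (fun E' hE' => hL E' (List.mem_cons_of_mem _ hE'))
          (init ∪ stp init E) (h.union (hstpFin _ _ h hE))
        simpa using this
    · simpa [hσ] using key ∅ (Set.finite_empty)
  refine ⟨σ, ?_, ?_⟩
  · intro L hL
    exact ⟨hσFin L (fun E hE => (hL E hE).1), fun U hU => hPiB.1 U (hσB L hU)⟩
  · intro D hD hresp
    set P : ℕ → Set (Set X) := fun n => σ (List.ofFn fun i : Fin n => D i) with hPdef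
    have hPsucc : ∀ n, P (n + 1) = P n ∪ stp (P n) (D n) := by
      intro n
      have hof : (List.ofFn fun i : Fin (n + 1) => D i)
          = (List.ofFn fun i : Fin n => D i).concat (D n) := by
        rw [List.ofFn_succ']
        rfl
      simp only [hPdef, hσ, hof, List.concat_eq_append, List.foldl_append, List.foldl_cons,
        List.foldl_nil]
    have hPmono : ∀ {m n : ℕ}, m ≤ n → P m ⊆ P n := by
      intro m n hmn
      exact monotone_nat_of_le_succ
        (fun k => (hPsucc k) ▸ Set.subset_union_left) hmn
    have hPB : ∀ n, P n ⊆ B := fun n => hσB _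
    have hfin_subset : ∀ T : Set (Set X), T.Finite → T ⊆ (⋃ n, P n) → ∃ n, T ⊆ P n := by
      intro T hT hsub
      have hch : ∀ A : Set X, ∃ n, A ∈ T → A ∈ P n := by
        intro A
        by_cases hA : A ∈ T
        · exact (Set.mem_iUnion.1 (hsub hA)).imp fun n hn _ => hn
        · exact ⟨0, fun hA' => absurd hA' hA⟩
      choose f hf using hch
      refine ⟨hT.toFinset.sup f, fun A hA => ?_⟩
      exact hPmono (Finset.le_sup (hT.mem_toFinset.2 hA)) (hf A hA)
    rw [dense_iff_inter_open]
    intro O hO hOne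
    by_contra hc
    have hdisjOS : ∀ x ∈ O, x ∉ ⋃ n, ⋃₀ D n := fun x hx hx' => hc ⟨x, hx, hx'⟩
    obtain ⟨U, hUB, hUO⟩ := hPiB.2 O hO hOne
    have hUne : U.Nonempty := (hPiB.1 U hUB).2
    set T : Set (Set X) := {A | A ∈ s U ∧ A ∈ (⋃ n, P n) ∧ U ⊆ A} with hT
    have hTfin : T.Finite := ((hs.1 U hUB).2).subset (fun A hA => hA.1)
    have hUsubT : U ⊆ ⋂₀ T := fun x hx => fun A hA => hA.2.2 hx
    obtain ⟨n₀, hTP⟩ := hfin_subset T hTfin (fun A hA => hA.2.1)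
    have hTne : (⋂₀ T).Nonempty := hUne.mono hUsubT
    have hTopen : IsOpen (⋂₀ T) :=
      Set.Finite.isOpen_sInter hTfin (fun A hA => (hPiB.1 A ((hPB n₀) (hTP hA))).1)
    have hGmem : pick (⋂₀ T) ∈ P (n₀ + 1) := by
      rw [hPsucc n₀]
      refine Set.mem_union_right _ (Set.mem_union_right _ ?_)
      exact ⟨⋂₀ T, ⟨T, fun A hA => ⟨hTP hA, (hPB n₀) (hTP hA)⟩, hTfin, rfl, hTne⟩, rfl⟩
    have hGsub : pick (⋂₀ T) ⊆ ⋂₀ T := hpickSub _ hTopen hTne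
    obtain ⟨V, hVD, hVG⟩ := hresp (n₀ + 1) (pick (⋂₀ T)) hGmem
    obtain ⟨hVo, hVne⟩ := (hD (n₀ + 1)).2 V hVD
    set W' : Set X := pick V with hW'
    have hW'B : W' ∈ B := hpickB V hVo hVne
    have hW'V : W' ⊆ V := hpickSub V hVo hVne
    have hW'P : W' ∈ P (n₀ + 2) := by
      rw [hPsucc (n₀ + 1)]
      refine Set.mem_union_right _ (Set.mem_union_left _ (Set.mem_union_right _ ?_))
      exact ⟨V, ⟨hVD, hVo, hVne⟩, rfl⟩
    have hUW' : Disjoint U W' := by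
      rw [Set.disjoint_left]
      intro x hxU hxW'
      exact hdisjOS x (hUO hxU)
        (Set.mem_iUnion.2 ⟨n₀ + 1, ⟨V, hVD, hW'V hxW'⟩⟩)
    obtain ⟨WU, hWUmem, WV, hWVmem, hdj, hUWU, hW'WV⟩ := hs.2 U hUB W' hW'B hUW'
    have hWUC : WU ∈ ⋃ n, P n := by
      refine Set.mem_iUnion.2 ⟨n₀ + 3, ?_⟩
      rw [hPsucc (n₀ + 2)]
      refine Set.mem_union_right _ (Set.mem_union_left _ (Set.mem_union_left _ ?_))
      simp only [Set.mem_iUnion, exists_prop]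
      exact ⟨W', ⟨hW'P, hW'B⟩, hWUmem.2⟩
    have hWUT : WU ∈ T := ⟨hWUmem.1, hWUC, hUWU⟩
    obtain ⟨x, hx⟩ := (hPiB.1 W' hW'B).2
    have hxWU : x ∈ WU := (hGsub (hVG (hW'V hx))) WU hWUT
    exact Set.disjoint_left.1 hdj hxWU (hW'WV hx)
end

section
/- Every topological space that has a development consisting of point-finite open covers has the FN property. -/
/-- A space with a development consisting of point-finite open covers has the
FN property. -/
theorem hasFN_of_pointFinite_development {X : Type*} [TopologicalSpace X]
    (W : ℕ → Set (Set X))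
    (hcover : ∀ n, (∀ U ∈ W n, IsOpen U) ∧ ⋃₀ W n = Set.univ)
    (hpf : ∀ n, ∀ x : X, {U ∈ W n | x ∈ U}.Finite)
    (hdev : ∀ x : X, ∀ U : Set X, IsOpen U → x ∈ U →
      ∃ n, ⋃₀ {V ∈ W n | x ∈ V} ⊆ U) :
    ∃ B : Set (Set X), IsTopBase B ∧ HasFN B := by
  classical
  -- refined development: finite intersections of members of `W 0, …, W n`
  set W' : ℕ → Set (Set X) := fun n =>
    (fun f : Fin (n+1) → Set X => ⋂ i, f i) '' {f | ∀ i : Fin (n+1), f i ∈ W i.1} with hW'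
  have hopen : ∀ n, ∀ U ∈ W' n, IsOpen U := by
    rintro n U ⟨f, hf, rfl⟩
    exact isOpen_iInter_of_finite fun i => (hcover i).1 _ (hf i)
  have hcov : ∀ n (x : X), ∃ U ∈ W' n, x ∈ U := by
    intro n x
    have hx : ∀ i : ℕ, ∃ U ∈ W i, x ∈ U := by
      intro i
      have h2 : x ∈ ⋃₀ W i := (hcover i).2 ▸ Set.mem_univ x
      exact h2
    refine ⟨⋂ i : Fin (n+1), (hx i).choose, ⟨_, fun i => (hx i).choose_spec.1, rfl⟩, ?_⟩
    exact Set.mem_iInter.2 fun i => (hx i).choose_spec.2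
  have hpf' : ∀ n (x : X), {U ∈ W' n | x ∈ U}.Finite := by
    intro n x
    have h1 : (Set.pi Set.univ (fun i : Fin (n+1) => {U ∈ W i | x ∈ U})).Finite :=
      Set.Finite.pi fun i => hpf i x
    refine (h1.image (fun f => ⋂ i, f i)).subset ?_
    rintro U ⟨⟨f, hf, rfl⟩, hxU⟩
    exact ⟨f, fun i _ => ⟨hf i, Set.mem_iInter.1 hxU i⟩, rfl⟩
  have hmono : ∀ {m n : ℕ}, m ≤ n → ∀ U ∈ W' n, ∃ U' ∈ W' m, U ⊆ U' := by
    rintro m n hmn U ⟨f, hf, rfl⟩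
    refine ⟨⋂ i : Fin (m+1), f (Fin.castLE (by omega) i),
      ⟨_, fun i => hf (Fin.castLE (by omega) i), rfl⟩, ?_⟩
    intro x hx
    exact Set.mem_iInter.2 fun i => Set.mem_iInter.1 hx _
  have hst : ∀ n (x : X), ∀ U ∈ W' n, x ∈ U → ∃ U' ∈ W n, x ∈ U' ∧ U ⊆ U' := by
    rintro n x U ⟨f, hf, rfl⟩ hx
    exact ⟨f (Fin.last n), hf (Fin.last n), Set.mem_iInter.1 hx _, Set.iInter_subset _ _⟩
  set B : Set (Set X) := {U | (∃ n, U ∈ W' n) ∧ U.Nonempty} with hB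
  refine ⟨B, ⟨?_, ?_⟩, ?_⟩
  · rintro U ⟨⟨n, hU⟩, -⟩
    exact hopen n U hU
  · intro U hU
    refine ⟨{V ∈ B | V ⊆ U}, fun V hV => hV.1, ?_⟩
    apply Set.Subset.antisymm
    · intro x hx
      obtain ⟨n, hn⟩ := hdev x U hU hx
      obtain ⟨V, hVW, hxV⟩ := hcov n x
      obtain ⟨U', hU', hxU', hVU'⟩ := hst n x V hVW hxV
      have hVU : V ⊆ U := hVU'.trans fun y hy => hn ⟨U', ⟨hU', hxU'⟩, hy⟩
      exact ⟨V, ⟨⟨⟨n, hVW⟩, ⟨x, hxV⟩⟩, hVU⟩, hxV⟩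
    · rintro x ⟨V, ⟨-, hVU⟩, hxV⟩
      exact hVU hxV
  · refine ⟨fun V => {U | U ∈ B ∧ V ⊆ U}, fun V => {V}, ?_, ?_, ?_⟩
    · rintro V hV
      refine ⟨?_, fun U hU => hU⟩
      obtain ⟨⟨n₀, hVn₀⟩, x, hxV⟩ := hV
      obtain ⟨N, hN⟩ := hdev x V (hopen n₀ V hVn₀) hxV
      have hsub : {U | U ∈ B ∧ V ⊆ U} ⊆
          insert V (⋃ m ∈ Set.Iio N, {U ∈ W' m | x ∈ U}) := by
        rintro U ⟨⟨⟨m, hUm⟩, -⟩, hVU⟩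
        by_cases hm : m < N
        · exact Set.mem_insert_iff.2 (Or.inr (Set.mem_biUnion hm ⟨hUm, hVU hxV⟩))
        · obtain ⟨U', hU', hUU'⟩ := hmono (le_of_not_gt hm) U hUm
          obtain ⟨U'', hU'', hxU'', hU'U''⟩ := hst N x U' hU' (hUU' (hVU hxV))
          have hUV : U ⊆ V := fun y hy =>
            hN ⟨U'', ⟨hU'', hxU''⟩, hU'U'' (hUU' hy)⟩
          exact Set.mem_insert_iff.2 (Or.inl (Set.Subset.antisymm hUV hVU))
      exact ((Set.Finite.biUnion (Set.finite_Iio N)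
        (fun m _ => hpf' m x)).insert V).subset hsub
    · intro V hV
      exact ⟨Set.finite_singleton V, fun U hU => by
        rw [Set.mem_singleton_iff] at hU; subst hU; exact ⟨hV, le_refl _⟩⟩
    · intro V hV Wset hWset hVW
      exact ⟨Wset, ⟨hWset, hVW⟩, rfl⟩
end

section
/- Every metrizable topological space has the FN property. -/
/-- Every metrizable space has the FN property. -/
theorem hasFN_of_metrizable {X : Type*} [TopologicalSpace X]
    [TopologicalSpace.MetrizableSpace X] :
    ∃ B : Set (Set X), IsTopBase B ∧ HasFN B := by
  classical
  letI : MetricSpace X := TopologicalSpace.metrizableSpaceMetric X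
  have key : ∀ n : ℕ, ∃ v : X → Set X, (∀ c, IsOpen (v c)) ∧ (⋃ c, v c) = Set.univ ∧
      LocallyFinite v ∧ ∀ c, v c ⊆ Metric.ball c ((1/2 : ℝ)^n) := by
    intro n
    obtain ⟨v, h1, h2, h3, h4⟩ := precise_refinement (fun c : X => Metric.ball c ((1/2 : ℝ)^n))
      (fun _ => Metric.isOpen_ball)
      (Set.iUnion_eq_univ_iff.2 fun x => ⟨x, Metric.mem_ball_self (by positivity)⟩)
    exact ⟨v, h1, h2, h3, h4⟩
  choose v hvo hvc hvlf hvsub using key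
  set Bn : ℕ → Set (Set X) := fun n => {W | W.Nonempty ∧ ∃ c, v n c = W} with hBn
  set B : Set (Set X) := {W | ∃ n, W ∈ Bn n} with hB
  have hopen : ∀ W ∈ B, IsOpen W := by
    rintro W ⟨n, -, c, rfl⟩; exact hvo n c
  have hsmall : ∀ n, ∀ W ∈ Bn n, ∀ a ∈ W, ∀ b ∈ W, dist a b < 2 * (1/2 : ℝ)^n := by
    rintro n W ⟨-, c, rfl⟩ a ha b hb
    have h1 := Metric.mem_ball.1 (hvsub n c ha)
    have h2 := Metric.mem_ball.1 (hvsub n c hb)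
    calc dist a b ≤ dist a c + dist b c := dist_triangle_right a b c
      _ < 2 * (1/2 : ℝ)^n := by linarith
  have hcover : ∀ n (x : X), ∃ W ∈ Bn n, x ∈ W := by
    intro n x
    have hx : x ∈ ⋃ c, v n c := (hvc n).symm ▸ Set.mem_univ x
    obtain ⟨c, hc⟩ := Set.mem_iUnion.1 hx
    exact ⟨v n c, ⟨⟨x, hc⟩, c, rfl⟩, hc⟩
  have hpf : ∀ n (x : X), {W | W ∈ Bn n ∧ x ∈ W}.Finite := by
    intro n x
    refine (((hvlf n).point_finite x).image (v n)).subset ?_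
    rintro W ⟨⟨-, c, rfl⟩, hx⟩; exact ⟨c, hx, rfl⟩
  have hexp : ∀ r : ℝ, 0 < r → ∃ n : ℕ, 2 * (1/2 : ℝ)^n < r := by
    intro r hr
    obtain ⟨n, hn⟩ := exists_pow_lt_of_lt_one (show (0:ℝ) < r/2 by linarith)
      (show (1/2 : ℝ) < 1 by norm_num)
    exact ⟨n, by linarith⟩
  have hmono : ∀ m M : ℕ, M ≤ m → (1/2 : ℝ)^m ≤ (1/2 : ℝ)^M :=
    fun m M h => pow_le_pow_of_le_one (by norm_num) (by norm_num) h
  have hbase : IsTopBase B := by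
    refine ⟨hopen, fun U hU => ⟨{W | W ∈ B ∧ W ⊆ U}, fun W hW => hW.1, ?_⟩⟩
    apply Set.Subset.antisymm
    · intro x hx
      obtain ⟨r, hr, hball⟩ := Metric.isOpen_iff.1 hU x hx
      obtain ⟨n, hn⟩ := hexp r hr
      obtain ⟨W, hW, hxW⟩ := hcover n x
      refine Set.mem_sUnion.2 ⟨W, ⟨⟨n, hW⟩, fun y hy => hball ?_⟩, hxW⟩
      exact Metric.mem_ball.2 (lt_trans (hsmall n W hW y hy x hxW) hn)
    · rintro x ⟨W, ⟨-, hWU⟩, hx⟩; exact hWU hx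
  -- the level bound M
  have hMex : ∀ V : Set X, ∃ M : ℕ, V ∈ B → ∀ m, M ≤ m → ∀ W ∈ Bn m, V ⊆ W → W = V := by
    intro V
    by_cases hVB : V ∈ B
    · obtain ⟨n, hVn⟩ := hVB
      obtain ⟨x, hxV⟩ := hVn.1
      by_cases hsub : ∀ a ∈ V, ∀ b ∈ V, a = b
      · obtain ⟨ε, hε, hball⟩ := Metric.isOpen_iff.1 (hopen V ⟨n, hVn⟩) x hxV
        obtain ⟨M, hMε⟩ := hexp ε hε
        refine ⟨M, fun _ m hm W hW hVW => ?_⟩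
        have hWV : W ⊆ V := by
          intro y hy
          have hd := hsmall m W hW y hy x (hVW hxV)
          have : (1/2 : ℝ)^m ≤ (1/2 : ℝ)^M := hmono m M hm
          exact hball (Metric.mem_ball.2 (by linarith))
        exact Set.Subset.antisymm hWV hVW
      · push_neg at hsub
        obtain ⟨a, ha, b, hb, hab⟩ := hsub
        obtain ⟨M, hMd⟩ := hexp (dist a b) (dist_pos.2 hab)
        refine ⟨M, fun _ m hm W hW hVW => absurd ?_ (lt_irrefl (dist a b))⟩
        have hd := hsmall m W hW a (hVW ha) b (hVW hb)
        have : (1/2 : ℝ)^m ≤ (1/2 : ℝ)^M := hmono m M hm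
        linarith
    · exact ⟨0, fun h => absurd h hVB⟩
  choose M hM using hMex
  refine ⟨B, hbase, ?_⟩
  refine ⟨fun V => insert V {W | ∃ m ≤ M V, W ∈ Bn m ∧ V ⊆ W}, fun V => {V}, ?_, ?_, ?_⟩
  · intro V hVB
    constructor
    · apply Set.Finite.insert
      obtain ⟨n, hVn⟩ := hVB
      obtain ⟨x, hxV⟩ := hVn.1
      refine Set.Finite.subset (Set.Finite.biUnion (Set.finite_Iic (M V))
        (fun m _ => hpf m x)) ?_
      rintro W ⟨m, hm, hWm, hVW⟩
      exact Set.mem_biUnion hm ⟨hWm, hVW hxV⟩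
    · rintro U (rfl | ⟨m, -, hUm, hVU⟩)
      · exact ⟨hVB, subset_rfl⟩
      · exact ⟨⟨m, hUm⟩, hVU⟩
  · intro V hVB
    exact ⟨Set.finite_singleton V, by rintro U rfl; exact ⟨hVB, subset_rfl⟩⟩
  · intro V hVB W hWB hVW
    refine ⟨W, ⟨?_, rfl⟩⟩
    obtain ⟨m, hWm⟩ := hWB
    rcases le_or_gt m (M V) with hle | hlt
    · exact Set.mem_insert_iff.2 (Or.inr ⟨m, hle, hWm, hVW⟩)
    · exact (hM V hVB m hlt.le W hWm hVW) ▸ Set.mem_insert _ _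
end

section
/- If B_X is a π-base of a topological space X and f : Z → X is an irreducible map, then the family {f⁻¹(B) : B ∈ B_X} is a π-base of Z. -/
/-- The small image `f^#(U) = {y : f⁻¹(y) ⊆ U}`. -/
def smallImage {Z Y : Type*} (f : Z → Y) (U : Set Z) : Set Y :=
  {y | f ⁻¹' {y} ⊆ U}

/-- An irreducible map: a continuous closed surjection such that no proper
closed subset of the domain maps onto the codomain. -/
def IsIrreducibleMap {Z Y : Type*} [TopologicalSpace Z] [TopologicalSpace Y]
    (f : Z → Y) : Prop :=
  Continuous f ∧ IsClosedMap f ∧ Function.Surjective f ∧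
  ∀ F : Set Z, IsClosed F → F ≠ Set.univ → f '' F ≠ Set.univ

/-- Preimages of a π-base under an irreducible map form a π-base. -/
theorem piBase_preimage_of_irreducible {Z X : Type*} [TopologicalSpace Z]
    [TopologicalSpace X] (f : Z → X) (hf : IsIrreducibleMap f)
    (BX : Set (Set X)) (hBX : IsPiBase BX) :
    IsPiBase ((fun B => f ⁻¹' B) '' BX) := by
  obtain ⟨hc, hcl, hsurj, hirr⟩ := hf
  constructor
  · rintro U ⟨B, hB, rfl⟩
    obtain ⟨hBo, hBne⟩ := hBX.1 B hB
    exact ⟨hBo.preimage hc, hBne.preimage hsurj⟩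
  · intro U hU hUne
    have hF : IsClosed Uᶜ := hU.isClosed_compl
    have hFne : Uᶜ ≠ Set.univ := by
      intro h
      obtain ⟨z, hz⟩ := hUne
      have : z ∈ Uᶜ := h ▸ Set.mem_univ z
      exact this hz
    have himg : f '' Uᶜ ≠ Set.univ := hirr _ hF hFne
    have hopen : IsOpen (f '' Uᶜ)ᶜ := (hcl _ hF).isOpen_compl
    have hne : (f '' Uᶜ)ᶜ.Nonempty := by
      rw [Set.nonempty_compl]; exact himg
    obtain ⟨B, hB, hBsub⟩ := hBX.2 _ hopen hne
    refine ⟨f ⁻¹' B, ⟨B, hB, rfl⟩, ?_⟩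
    intro z hz
    by_contra hzU
    exact hBsub hz ⟨z, hzU, rfl⟩
end

section
/- Let Z, X, Y be topological spaces and let g : Z → X and f : Z → Y be irreducible maps. If X has the π-FNS property, then Y has the π-FNS property; moreover, if B_X is a π-base of X with the FNS property, then {f^#(g⁻¹(V)) : V ∈ B_X} is a π-base of Y with the FNS property. (In particular, every space co-absolute to a space with the π-FNS property has the π-FNS property.) -/
section SmallImageHelpers

variable {Z Y : Type*} [TopologicalSpace Z] [TopologicalSpace Y]

lemma smallImage_eq_compl (f : Z → Y) (U : Set Z) :
    smallImage f U = (f '' Uᶜ)ᶜ := by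
  ext y
  simp only [smallImage, Set.mem_setOf_eq, Set.mem_compl_iff, Set.mem_image]
  constructor
  · rintro h ⟨z, hz, rfl⟩
    exact hz (h rfl)
  · intro h z hz
    by_contra hzU
    exact h ⟨z, hzU, hz⟩

lemma smallImage_isOpen {f : Z → Y} (hf : IsClosedMap f) {U : Set Z}
    (hU : IsOpen U) : IsOpen (smallImage f U) := by
  rw [smallImage_eq_compl]
  exact (hf _ hU.isClosed_compl).isOpen_compl

lemma smallImage_nonempty {f : Z → Y} (hf : IsIrreducibleMap f) {U : Set Z}
    (hU : IsOpen U) (hne : U.Nonempty) : (smallImage f U).Nonempty := by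
  rw [smallImage_eq_compl, Set.nonempty_compl]
  refine hf.2.2.2 _ hU.isClosed_compl ?_
  intro h
  obtain ⟨x, hx⟩ := hne
  have : x ∈ Uᶜ := h ▸ Set.mem_univ x
  exact this hx

lemma smallImage_mono (f : Z → Y) {U V : Set Z} (h : U ⊆ V) :
    smallImage f U ⊆ smallImage f V := fun _ hy => hy.trans h

lemma smallImage_inter (f : Z → Y) (U V : Set Z) :
    smallImage f (U ∩ V) = smallImage f U ∩ smallImage f V := by
  ext y
  simp [smallImage, Set.subset_inter_iff]

lemma smallImage_disjoint {f : Z → Y} (hs : Function.Surjective f) {U V : Set Z}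
    (h : Disjoint U V) : Disjoint (smallImage f U) (smallImage f V) := by
  rw [Set.disjoint_iff_inter_eq_empty, ← smallImage_inter]
  rw [Set.disjoint_iff_inter_eq_empty] at h
  rw [h]
  ext y
  simp only [smallImage, Set.mem_setOf_eq, Set.mem_empty_iff_false, iff_false]
  intro hy
  obtain ⟨z, rfl⟩ := hs y
  exact hy rfl

lemma smallImage_preimage_subset {f : Z → Y} (hs : Function.Surjective f)
    (W : Set Y) : smallImage f (f ⁻¹' W) ⊆ W := by
  intro y hy
  obtain ⟨z, rfl⟩ := hs y
  exact hy rfl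

end SmallImageHelpers

/-- If `g : Z → X` and `f : Z → Y` are irreducible maps and `X` has the π-FNS
property, then so does `Y`; moreover the family `{f^#(g⁻¹(V)) : V ∈ B_X}` is a
π-base of `Y` with the FNS property whenever `B_X` is a π-base of `X` with the
FNS property. -/

theorem piFNS_of_coabsolute {Z X Y : Type*} [TopologicalSpace Z]
    [TopologicalSpace X] [TopologicalSpace Y]
    (g : Z → X) (f : Z → Y) (hg : IsIrreducibleMap g)
    (hf : IsIrreducibleMap f) :
    (HasPiFNS X → HasPiFNS Y) ∧
    ∀ BX : Set (Set X), IsPiBase BX → HasFNS BX →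
      IsPiBase ((fun V => smallImage f (g ⁻¹' V)) '' BX) ∧
      HasFNS ((fun V => smallImage f (g ⁻¹' V)) '' BX) := by
  classical
  obtain ⟨gc, gcl, gs, girr⟩ := hg
  obtain ⟨fc, fcl, fs, firr⟩ := hf
  set φ : Set X → Set Y := fun V => smallImage f (g ⁻¹' V) with hφ
  have main : ∀ BX : Set (Set X), IsPiBase BX → HasFNS BX →
      IsPiBase (φ '' BX) ∧ HasFNS (φ '' BX) := by
    intro BX hB hFNS
    have hopen : ∀ V ∈ BX, IsOpen (φ V) ∧ (φ V).Nonempty := by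
      intro V hV
      obtain ⟨hVo, hVne⟩ := hB.1 V hV
      refine ⟨smallImage_isOpen fcl (hVo.preimage gc),
        smallImage_nonempty ⟨fc, fcl, fs, firr⟩ (hVo.preimage gc) ?_⟩
      obtain ⟨x, hx⟩ := hVne
      obtain ⟨z, rfl⟩ := gs x
      exact ⟨z, hx⟩
    constructor
    · constructor
      · rintro _ ⟨V, hV, rfl⟩
        exact hopen V hV
      · intro W hWo hWne
        have h1 : IsOpen (smallImage g (f ⁻¹' W)) :=
          smallImage_isOpen gcl (hWo.preimage fc)
        have h2 : (smallImage g (f ⁻¹' W)).Nonempty := by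
          refine smallImage_nonempty ⟨gc, gcl, gs, girr⟩ (hWo.preimage fc) ?_
          obtain ⟨y, hy⟩ := hWne
          obtain ⟨z, rfl⟩ := fs y
          exact ⟨z, hy⟩
        obtain ⟨V, hV, hVsub⟩ := hB.2 _ h1 h2
        refine ⟨φ V, ⟨V, hV, rfl⟩, ?_⟩
        have hsub : g ⁻¹' V ⊆ f ⁻¹' W := fun z hz => (hVsub hz) rfl
        exact (smallImage_mono f hsub).trans (smallImage_preimage_subset fs W)
    · obtain ⟨s, hs1, hs2⟩ := hFNS
      have hrev : ∀ V1 ∈ BX, ∀ V2 ∈ BX, Disjoint (φ V1) (φ V2) →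
          Disjoint V1 V2 := by
        intro V1 h1 V2 h2 hd
        rw [Set.disjoint_iff_inter_eq_empty]
        by_contra hne
        obtain ⟨x, hx⟩ := Set.nonempty_iff_ne_empty.mpr hne
        have hop : IsOpen (g ⁻¹' (V1 ∩ V2)) :=
          ((hB.1 V1 h1).1.inter (hB.1 V2 h2).1).preimage gc
        have hn : (g ⁻¹' (V1 ∩ V2)).Nonempty := by
          obtain ⟨z, rfl⟩ := gs x
          exact ⟨z, hx⟩
        obtain ⟨y, hy⟩ := smallImage_nonempty ⟨fc, fcl, fs, firr⟩ hop hn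
        rw [Set.preimage_inter, smallImage_inter] at hy
        exact absurd hy.2 (Set.disjoint_left.mp hd hy.1)
      let pick : Set Y → Set X := fun W =>
        if h : W ∈ φ '' BX then h.choose else ∅
      have hpick : ∀ W ∈ φ '' BX, pick W ∈ BX ∧ φ (pick W) = W := by
        intro W hW
        simp only [pick, dif_pos hW]
        exact hW.choose_spec
      refine ⟨fun W => φ '' s (pick W), ?_, ?_⟩
      · intro W hW
        obtain ⟨hp1, hp2⟩ := hpick W hW
        obtain ⟨hsub, hfin⟩ := hs1 (pick W) hp1
        exact ⟨Set.image_mono hsub, hfin.image _⟩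
      · rintro W1 hW1 W2 hW2 hd
        obtain ⟨hp1, hq1⟩ := hpick W1 hW1
        obtain ⟨hp2, hq2⟩ := hpick W2 hW2
        have hdV : Disjoint (pick W1) (pick W2) := by
          apply hrev _ hp1 _ hp2
          rw [hq1, hq2]
          exact hd
        obtain ⟨WU, hWU, WV, hWV, hdW, hU1, hV2⟩ :=
          hs2 (pick W1) hp1 (pick W2) hp2 hdV
        refine ⟨φ WU, ⟨⟨WU, hWU.1, rfl⟩, ⟨WU, hWU.2, rfl⟩⟩,
          φ WV, ⟨⟨WV, hWV.1, rfl⟩, ⟨WV, hWV.2, rfl⟩⟩, ?_, ?_, ?_⟩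
        · exact smallImage_disjoint fs (hdW.preimage g)
        · rw [← hq1]
          exact smallImage_mono f (Set.preimage_mono hU1)
        · rw [← hq2]
          exact smallImage_mono f (Set.preimage_mono hV2)
  refine ⟨?_, main⟩
  rintro ⟨B, h1, h2⟩
  exact ⟨φ '' B, (main B h1 h2).1, (main B h1 h2).2⟩
end

section
/- The Čech–Stone compactification βℕ of the discrete space of natural numbers does not have the FNS property: no base of βℕ has the FNS property. -/
open Set

-- clopen set corresponding to a subset of ℕ
lemma clopenOf (a : Set ℕ) : ∃ V : Set (StoneCech ℕ), IsOpen V ∧ IsClosed V ∧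
    ∀ m : ℕ, (stoneCechUnit m ∈ V ↔ m ∈ a) := by
  classical
  set g : ℕ → Bool := fun m => if m ∈ a then true else false with hg
  have hgc : Continuous g := continuous_of_discreteTopology
  refine ⟨stoneCechExtend hgc ⁻¹' {true},
    (continuous_stoneCechExtend hgc).isOpen_preimage _ (isOpen_discrete _),
    IsClosed.preimage (continuous_stoneCechExtend hgc) (isClosed_discrete _), fun m => ?_⟩
  have h1 : stoneCechExtend hgc (stoneCechUnit m) = g m :=
    congrFun (stoneCechExtend_extends hgc) m
  simp only [mem_preimage, h1, mem_singleton_iff, hg]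
  by_cases h : m ∈ a <;> simp [h]

lemma singleton_open (n : ℕ) : IsOpen ({stoneCechUnit n} : Set (StoneCech ℕ)) := by
  obtain ⟨V, hVo, _, hVmem⟩ := clopenOf {n}
  have hsub : V ⊆ {stoneCechUnit n} := by
    have h1 : V ⊆ closure (V ∩ Set.range (stoneCechUnit : ℕ → StoneCech ℕ)) :=
      denseRange_stoneCechUnit.open_subset_closure_inter hVo
    have h2 : V ∩ Set.range (stoneCechUnit : ℕ → StoneCech ℕ) ⊆ {stoneCechUnit n} := by
      rintro x ⟨hxV, m, rfl⟩
      have := (hVmem m).1 hxV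
      simp only [mem_singleton_iff] at this ⊢
      rw [this]
    calc V ⊆ closure (V ∩ Set.range stoneCechUnit) := h1
      _ ⊆ closure {stoneCechUnit n} := closure_mono h2
      _ = {stoneCechUnit n} := closure_singleton
  have heq : V = {stoneCechUnit n} :=
    hsub.antisymm (by intro x hx; rw [mem_singleton_iff] at hx; subst hx
                      exact (hVmem n).2 rfl)
  exact heq ▸ hVo


section AuxAvoid

lemma exists_avoiding (D : Set (Set ℕ)) (hD : D.Countable) :
    ∃ a : Set ℕ, a.Infinite ∧ ∀ d ∈ D, d ⊆ a → d.Finite := by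
  classical
  set D' : Set (Set ℕ) := insert Set.univ {d ∈ D | d.Infinite} with hD'
  have hD'c : D'.Countable := (hD.mono (sep_subset _ _)).insert _
  have hD'ne : D'.Nonempty := ⟨Set.univ, mem_insert _ _⟩
  obtain ⟨b, hb⟩ := hD'c.exists_eq_range hD'ne
  have hbinf : ∀ k, (b k).Infinite := by
    intro k
    have : b k ∈ D' := hb ▸ mem_range_self k
    rcases this with h | h
    · rw [h]; exact infinite_univ
    · exact h.2
  have hex : ∀ k (m : ℕ), ∃ x, x ∈ b k ∧ m < x := by
    intro k m
    obtain ⟨x, hx1, hx2⟩ := (hbinf k).exists_gt m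
    exact ⟨x, hx1, hx2⟩
  -- recursive sequence
  let F : ℕ → ℕ := fun k => Nat.rec (Classical.choose (hex 0 0))
    (fun k xk => Classical.choose (hex (k + 1) (xk + 1))) k
  have hF0 : F 0 = Classical.choose (hex 0 0) := rfl
  have hFs : ∀ k, F (k + 1) = Classical.choose (hex (k + 1) (F k + 1)) := fun k => rfl
  have hFmem : ∀ k, F k ∈ b k := by
    intro k
    cases k with
    | zero => exact (Classical.choose_spec (hex 0 0)).1
    | succ k => rw [hFs k]; exact (Classical.choose_spec (hex (k + 1) (F k + 1))).1
  have hFgt : ∀ k, F k + 1 < F (k + 1) := by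
    intro k
    rw [hFs k]
    exact (Classical.choose_spec (hex (k + 1) (F k + 1))).2
  have hFmono : StrictMono F := strictMono_nat_of_lt_succ fun k =>
    lt_trans (Nat.lt_succ_self _) (hFgt k)
  set a : Set ℕ := Set.range (fun k => F k + 1) with ha
  have hainf : a.Infinite := infinite_range_of_injective (fun i j h => by
    exact hFmono.injective (Nat.succ_injective h))
  have hFnot : ∀ k, F k ∉ a := by
    rintro k ⟨j, hj⟩
    simp only at hj
    rcases lt_or_ge j k with h | h
    · -- F j + 1 < F (j+1) ≤ F k
      have h1 : F j + 1 < F (j + 1) := hFgt j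
      have h2 : F (j + 1) ≤ F k := hFmono.monotone h
      omega
    · have h2 : F k ≤ F j := hFmono.monotone h
      omega
  refine ⟨a, hainf, fun d hd hda => ?_⟩
  by_contra hdinf
  have hdD' : d ∈ D' := Or.inr ⟨hd, hdinf⟩
  rw [hb] at hdD'
  obtain ⟨k, hk⟩ := hdD'
  exact hFnot k (hda (hk ▸ hFmem k))

end AuxAvoid


/-- No base of the Čech–Stone compactification of the discrete space `ℕ` has
the FNS property. -/
theorem stoneCechNat_not_FNS :
    ¬ ∃ B : Set (Set (StoneCech ℕ)), IsTopBase B ∧ HasFNS B := by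
  classical
  rintro ⟨B, ⟨hBopen, hBbase⟩, s, hs1, hs2⟩
  -- singletons are in B
  have hsing : ∀ n : ℕ, ({stoneCechUnit n} : Set (StoneCech ℕ)) ∈ B := by
    intro n
    obtain ⟨S, hSB, hSeq⟩ := hBbase _ (singleton_open n)
    have : stoneCechUnit n ∈ ⋃₀ S := hSeq ▸ rfl
    obtain ⟨W, hWS, hWmem⟩ := this
    have hWsub : W ⊆ {stoneCechUnit n} := hSeq ▸ subset_sUnion_of_mem hWS
    have : W = {stoneCechUnit n} := hWsub.antisymm (by
      intro x hx; rw [mem_singleton_iff] at hx; exact hx ▸ hWmem)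
    exact this ▸ hSB hWS
  set S : ℕ → Set (Set (StoneCech ℕ)) := fun n => s ({stoneCechUnit n}) with hS
  have hSfin : ∀ n, (S n).Finite := fun n => (hs1 _ (hsing n)).2
  set tr : Set (StoneCech ℕ) → Set ℕ := fun C => {m | stoneCechUnit m ∈ C} with htr
  set D : Set (Set ℕ) := ⋃ n, (fun T' => tr (⋂₀ T')) '' {T' | T' ⊆ S n} with hD
  have hDc : D.Countable := countable_iUnion fun n =>
    (((hSfin n).finite_subsets).image _).countable
  obtain ⟨a, hainf, ha⟩ := exists_avoiding D hDc
  obtain ⟨V, hVo, hVc, hVmem⟩ := clopenOf aᶜ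
  obtain ⟨S', hS'B, hVeq⟩ := hBbase V hVo
  have hVcov : V ⊆ ⋃ W ∈ S', W := by rw [← sUnion_eq_biUnion, ← hVeq]
  obtain ⟨T, hTS', hTfin, hTcov⟩ := (hVc.isCompact).elim_finite_subcover_image
    (fun W hW => hBopen W (hS'B hW)) hVcov
  -- unit n ∉ V for n ∈ a
  have hunV : ∀ n ∈ a, stoneCechUnit n ∉ V := by
    intro n hn h
    exact (hVmem n).1 h hn
  have key : ∀ n ∈ a, ∀ W ∈ T, ∃ A : Set (StoneCech ℕ),
      A ∈ S n ∧ A ∈ s W ∧ stoneCechUnit n ∈ A ∧ A ∩ W = ∅ := by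
    intro n hn W hWT
    have hWB : W ∈ B := hS'B (hTS' hWT)
    have hWV : W ⊆ V := hVeq ▸ subset_sUnion_of_mem (hTS' hWT)
    have hdis : Disjoint ({stoneCechUnit n} : Set (StoneCech ℕ)) W := by
      rw [Set.disjoint_left]
      rintro x hx
      rw [mem_singleton_iff] at hx
      subst hx
      exact fun hxW => hunV n hn (hWV hxW)
    obtain ⟨WU, hWU, WV, hWV', hd, hUsub, hVsub⟩ := hs2 _ (hsing n) W hWB hdis
    refine ⟨WU, hWU.1, hWU.2, hUsub rfl, ?_⟩
    apply eq_empty_iff_forall_notMem.mpr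
    rintro x ⟨hx1, hx2⟩
    exact (Set.disjoint_left.mp hd) hx1 (hVsub hx2)
  choose! A hA1 hA2 hA3 hA4 using key
  set C : ℕ → Set (StoneCech ℕ) := fun n => ⋂ W ∈ T, A n W with hC
  have hCmem : ∀ n ∈ a, stoneCechUnit n ∈ C n := by
    intro n hn
    exact mem_iInter₂.mpr fun W hW => hA3 n hn W hW
  have htrCa : ∀ n ∈ a, tr (C n) ⊆ a := by
    intro n hn m hm
    by_contra hma
    have h1 : stoneCechUnit m ∈ V := (hVmem m).2 hma
    obtain ⟨W, hWT, hmW⟩ := mem_iUnion₂.mp (hTcov h1)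
    have h2 : stoneCechUnit m ∈ A n W := mem_iInter₂.mp hm W hWT
    have := hA4 n hn W hWT
    have h3 : stoneCechUnit m ∈ A n W ∩ W := ⟨h2, hmW⟩
    rw [this] at h3
    exact notMem_empty _ h3
  have htrD : ∀ n ∈ a, tr (C n) ∈ D := by
    intro n hn
    apply mem_iUnion.mpr
    refine ⟨n, A n '' T, fun x => ?_, ?_⟩
    · rintro ⟨W, hWT, rfl⟩
      exact hA1 n hn W hWT
    · simp only
      rw [sInter_image]
  have htrfin : ∀ n ∈ a, (tr (C n)).Finite := fun n hn =>
    ha _ (htrD n hn) (htrCa n hn)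
  -- finiteness of {C n : n ∈ a}
  haveI : Fintype T := hTfin.fintype
  have hCfin : (C '' a).Finite := by
    have hsub : C '' a ⊆ (fun g : T → Set (StoneCech ℕ) => ⋂ W : T, g W) ''
        (Set.pi Set.univ fun W : T => s (W : Set (StoneCech ℕ))) := by
      rintro _ ⟨n, hn, rfl⟩
      refine ⟨fun W => A n W, fun W _ => hA2 n hn W W.2, ?_⟩
      simp only [hC]
      rw [biInter_eq_iInter]
    exact (Set.Finite.pi fun W : T =>
      (hs1 _ (hS'B (hTS' W.2))).2).image _ |>.subset hsub
  have hacov : a ⊆ ⋃ c ∈ C '' a, tr c := by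
    intro n hn
    exact mem_iUnion₂.mpr ⟨C n, mem_image_of_mem C hn, hCmem n hn⟩
  have : a.Finite := Set.Finite.subset (hCfin.biUnion (fun c hc => by
    obtain ⟨n, hn, rfl⟩ := hc
    exact htrfin n hn)) hacov
  exact hainf this
end
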